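/- arXiv:1601.03353 — 5 statements merged into one kernel-verified Lean document; each statement's English description precedes it below -/
import Mathlib

section
/- Let λ ∈ ℂ with |λ| = 1 and suppose λ is not a root of unity. Consider the symbol φ(z) = λz. Then the composition operator C_φ : A(𝔻) → A(𝔻) is mean ergodic, and its Cesàro means (C_φ)_[n] f converge in the sup norm to the constant function f(0) for every f ∈ A(𝔻). -/
open Metric Set Filter Complex
open scoped Topology Classical

noncomputable section

/-- Membership in the disc algebra `A(𝔻)`: continuous on the closed unit disc and
holomorphic on the open unit disc. -/
def IsDiscAlg (f : ℂ → ℂ) : Prop :=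
  ContinuousOn f (closedBall (0:ℂ) 1) ∧ DifferentiableOn ℂ f (ball (0:ℂ) 1)

/-- Membership in `H^∞(𝔻)`: bounded and holomorphic on the open unit disc. -/
def IsHInf (f : ℂ → ℂ) : Prop :=
  DifferentiableOn ℂ f (ball (0:ℂ) 1) ∧ ∃ M : ℝ, ∀ z ∈ ball (0:ℂ) 1, ‖f z‖ ≤ M

/-- The Cesàro means `(C_φ)_[n] f = (1/n) ∑_{m=1}^n f ∘ φ^m` of the composition
operator `C_φ f = f ∘ φ`. -/
def cesaro (φ f : ℂ → ℂ) (n : ℕ) (z : ℂ) : ℂ :=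
  (n : ℂ)⁻¹ * ∑ m ∈ Finset.Icc 1 n, f (φ^[m] z)

/-- `C_φ` is mean ergodic on `A(𝔻)`: for each `f ∈ A(𝔻)` the Cesàro means converge
in the sup norm on the closed disc. -/
def MeanErgodicDiscAlg (φ : ℂ → ℂ) : Prop :=
  ∀ f : ℂ → ℂ, IsDiscAlg f →
    ∃ g : ℂ → ℂ, TendstoUniformlyOn (cesaro φ f) g atTop (closedBall (0:ℂ) 1)

/-- `C_φ` is uniformly mean ergodic on `A(𝔻)`: the Cesàro means converge in operator
norm, i.e. uniformly over the unit ball of `A(𝔻)`. -/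
def UnifMeanErgodicDiscAlg (φ : ℂ → ℂ) : Prop :=
  ∃ P : (ℂ → ℂ) → ℂ → ℂ, ∀ ε > (0:ℝ), ∃ N : ℕ, ∀ n ≥ N,
    ∀ f : ℂ → ℂ, IsDiscAlg f → (∀ z ∈ closedBall (0:ℂ) 1, ‖f z‖ ≤ 1) →
      ∀ z ∈ closedBall (0:ℂ) 1, ‖cesaro φ f n z - P f z‖ ≤ ε

/-- `C_φ` is mean ergodic on `H^∞(𝔻)`: for each `f ∈ H^∞(𝔻)` the Cesàro means converge
in the sup norm on the open disc. -/
def MeanErgodicHInf (φ : ℂ → ℂ) : Prop :=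
  ∀ f : ℂ → ℂ, IsHInf f →
    ∃ g : ℂ → ℂ, TendstoUniformlyOn (cesaro φ f) g atTop (ball (0:ℂ) 1)

/-- `C_φ` is uniformly mean ergodic on `H^∞(𝔻)`: the Cesàro means converge in operator
norm, i.e. uniformly over the unit ball of `H^∞(𝔻)`. -/
def UnifMeanErgodicHInf (φ : ℂ → ℂ) : Prop :=
  ∃ P : (ℂ → ℂ) → ℂ → ℂ, ∀ ε > (0:ℝ), ∃ N : ℕ, ∀ n ≥ N,
    ∀ f : ℂ → ℂ, IsHInf f → (∀ z ∈ ball (0:ℂ) 1, ‖f z‖ ≤ 1) →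
      ∀ z ∈ ball (0:ℂ) 1, ‖cesaro φ f n z - P f z‖ ≤ ε

/-- `φ` is an automorphism (biholomorphic self-map) of the open unit disc. -/
def IsDiscAutomorphism (φ : ℂ → ℂ) : Prop :=
  DifferentiableOn ℂ φ (ball (0:ℂ) 1) ∧ MapsTo φ (ball (0:ℂ) 1) (ball (0:ℂ) 1) ∧
  ∃ ψ : ℂ → ℂ, DifferentiableOn ℂ ψ (ball (0:ℂ) 1) ∧
    MapsTo ψ (ball (0:ℂ) 1) (ball (0:ℂ) 1) ∧
    (∀ z ∈ ball (0:ℂ) 1, ψ (φ z) = z) ∧ ∀ z ∈ ball (0:ℂ) 1, φ (ψ z) = z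

/-- An elliptic automorphism of the disc: an automorphism with a fixed point in `𝔻`. -/
def IsEllipticAutomorphism (φ : ℂ → ℂ) : Prop :=
  IsDiscAutomorphism φ ∧ ∃ z ∈ ball (0:ℂ) 1, φ z = z

/-- A hyperbolic automorphism of the disc: an automorphism with exactly two fixed
points, both on the unit circle. -/
def IsHyperbolicAutomorphism (φ : ℂ → ℂ) : Prop :=
  IsDiscAutomorphism φ ∧ ∃ p q : ℂ, p ≠ q ∧ ‖p‖ = 1 ∧ ‖q‖ = 1 ∧ φ p = p ∧ φ q = q ∧
    ∀ z ∈ closedBall (0:ℂ) 1, φ z = z → z = p ∨ z = q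

/-- A parabolic automorphism of the disc: an automorphism with exactly one fixed
point, lying on the unit circle. -/
def IsParabolicAutomorphism (φ : ℂ → ℂ) : Prop :=
  IsDiscAutomorphism φ ∧ ∃ p : ℂ, ‖p‖ = 1 ∧ φ p = p ∧
    ∀ z ∈ closedBall (0:ℂ) 1, φ z = z → z = p

/-- A set `J ⊆ ℕ` has density one: `#(J ∩ [0,N]) / N → 1` as `N → ∞`. -/
def HasDensityOne (J : Set ℕ) : Prop :=
  Tendsto (fun N : ℕ => (((Finset.range (N + 1)).filter (fun n => n ∈ J)).card : ℝ) / N)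
    atTop (𝓝 1)

/-- A typical weight on `𝔻`: continuous, strictly positive, bounded, radial,
non-increasing in `|z|`, and tending to `0` as `|z| → 1`. -/
def IsTypicalWeight (v : ℂ → ℝ) : Prop :=
  ContinuousOn v (ball (0:ℂ) 1) ∧ (∀ z ∈ ball (0:ℂ) 1, 0 < v z) ∧
  (∃ M : ℝ, ∀ z ∈ ball (0:ℂ) 1, v z ≤ M) ∧
  (∀ z ∈ ball (0:ℂ) 1, ∀ w ∈ ball (0:ℂ) 1, ‖z‖ = ‖w‖ → v z = v w) ∧
  (∀ z ∈ ball (0:ℂ) 1, ∀ w ∈ ball (0:ℂ) 1, ‖z‖ ≤ ‖w‖ → v w ≤ v z) ∧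
  (∀ ε > (0:ℝ), ∃ r : ℝ, r < 1 ∧ ∀ z ∈ ball (0:ℂ) 1, r ≤ ‖z‖ → v z < ε)

/-- Membership in the weighted space `H_v^∞`. -/
def IsHvInf (v : ℂ → ℝ) (f : ℂ → ℂ) : Prop :=
  DifferentiableOn ℂ f (ball (0:ℂ) 1) ∧ ∃ M : ℝ, ∀ z ∈ ball (0:ℂ) 1, v z * ‖f z‖ ≤ M

/-- Membership in the weighted space `H_v^0`. -/
def IsHv0 (v : ℂ → ℝ) (f : ℂ → ℂ) : Prop :=
  IsHvInf v f ∧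
  ∀ ε > (0:ℝ), ∃ r : ℝ, r < 1 ∧ ∀ z ∈ ball (0:ℂ) 1, r ≤ ‖z‖ → v z * ‖f z‖ < ε

open scoped NNReal ENNReal

lemma rot_iter (lam z : ℂ) (m : ℕ) : (fun w => lam * w)^[m] z = lam ^ m * z := by
  induction m with
  | zero => simp
  | succ k ih => rw [Function.iterate_succ_apply', ih, pow_succ]; ring

lemma cesaro_rot (lam : ℂ) (f : ℂ → ℂ) (n : ℕ) (z : ℂ) :
    cesaro (fun w => lam * w) f n z = (n:ℂ)⁻¹ * ∑ m ∈ Finset.Icc 1 n, f (lam ^ m * z) := by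
  unfold cesaro
  congr 1
  exact Finset.sum_congr rfl fun m _ => by rw [rot_iter]

lemma cesaro_sub_bound (lam : ℂ) (hlam : ‖lam‖ = 1) (f g : ℂ → ℂ) (C : ℝ)
    (h : ∀ w ∈ closedBall (0:ℂ) 1, ‖f w - g w‖ ≤ C) {n : ℕ} (hn : 1 ≤ n)
    {z : ℂ} (hz : z ∈ closedBall (0:ℂ) 1) :
    ‖cesaro (fun w => lam * w) f n z - cesaro (fun w => lam * w) g n z‖ ≤ C := by
  simp only [mem_closedBall, dist_zero_right] at hz
  rw [cesaro_rot, cesaro_rot, ← mul_sub, ← Finset.sum_sub_distrib]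
  have hn' : (0:ℝ) < n := by exact_mod_cast hn
  have h1 : ‖∑ m ∈ Finset.Icc 1 n, (f (lam^m*z) - g (lam^m*z))‖
      ≤ ∑ m ∈ Finset.Icc 1 n, C := by
    refine norm_sum_le_of_le _ fun m _ => h _ ?_
    simp only [mem_closedBall, dist_zero_right, norm_mul, norm_pow, hlam, one_pow, one_mul]
    exact hz
  have h2 : ∑ m ∈ Finset.Icc 1 n, C = n * C := by
    rw [Finset.sum_const, Nat.card_Icc]
    simp [nsmul_eq_mul]
  calc ‖(n:ℂ)⁻¹ * ∑ m ∈ Finset.Icc 1 n, (f (lam^m*z) - g (lam^m*z))‖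
      = (n:ℝ)⁻¹ * ‖∑ m ∈ Finset.Icc 1 n, (f (lam^m*z) - g (lam^m*z))‖ := by
        rw [norm_mul, norm_inv, Complex.norm_natCast]
    _ ≤ (n:ℝ)⁻¹ * (n * C) := by rw [← h2]; gcongr
    _ = C := by field_simp

lemma geom_bound (mu : ℂ) (hmu : ‖mu‖ = 1) (hne : mu ≠ 1) (n : ℕ) :
    ‖∑ m ∈ Finset.Icc 1 n, mu ^ m‖ ≤ 2 / ‖mu - 1‖ := by
  have key : ∑ m ∈ Finset.Icc 1 n, mu ^ m = mu * ((mu ^ n - 1) / (mu - 1)) := by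
    rw [← Finset.Ico_add_one_right_eq_Icc, Finset.sum_Ico_eq_sum_range]
    have hcard : n + 1 - 1 = n := by omega
    rw [hcard]
    calc ∑ i ∈ Finset.range n, mu ^ (1 + i)
        = ∑ i ∈ Finset.range n, mu * mu ^ i :=
          Finset.sum_congr rfl fun i _ => by rw [pow_add, pow_one]
      _ = mu * ∑ i ∈ Finset.range n, mu ^ i := by rw [Finset.mul_sum]
      _ = mu * ((mu ^ n - 1) / (mu - 1)) := by rw [geom_sum_eq hne]
  rw [key, norm_mul, hmu, one_mul, norm_div]
  have hpos : 0 < ‖mu - 1‖ := norm_pos_iff.2 (sub_ne_zero.2 hne)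
  have hnum : ‖mu ^ n - 1‖ ≤ 2 := by
    calc ‖mu ^ n - 1‖ ≤ ‖mu ^ n‖ + ‖(1:ℂ)‖ := norm_sub_le _ _
      _ = 2 := by rw [norm_pow, hmu, one_pow, norm_one]; norm_num
  gcongr

lemma poly_cesaro_bound (lam : ℂ) (hlam : ‖lam‖ = 1)
    (hnotroot : ∀ j : ℕ, 0 < j → lam ^ j ≠ 1) (c : ℕ → ℂ) (N : ℕ) {n : ℕ} (hn : 1 ≤ n)
    {z : ℂ} (hz : ‖z‖ ≤ 1) :
    ‖cesaro (fun w => lam * w) (fun w => ∑ k ∈ Finset.range N, w ^ k * c k) n z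
      - ∑ k ∈ Finset.range N, (0:ℂ) ^ k * c k‖
      ≤ (∑ k ∈ Finset.range N, ‖c k‖ * (2 / ‖lam ^ k - 1‖)) / n := by
  have hn' : (0:ℝ) < n := by exact_mod_cast hn
  have key : cesaro (fun w => lam * w) (fun w => ∑ k ∈ Finset.range N, w ^ k * c k) n z
      - ∑ k ∈ Finset.range N, (0:ℂ) ^ k * c k
      = ∑ k ∈ Finset.range N,
          ((n:ℂ)⁻¹ * (∑ m ∈ Finset.Icc 1 n, (lam ^ k) ^ m) - (0:ℂ) ^ k) * (z ^ k * c k) := by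
    rw [cesaro_rot]
    have e1 : ∀ m ∈ Finset.Icc 1 n, (∑ k ∈ Finset.range N, (lam ^ m * z) ^ k * c k)
        = ∑ k ∈ Finset.range N, (lam ^ k) ^ m * (z ^ k * c k) := by
      intro m _
      refine Finset.sum_congr rfl fun k _ => by rw [mul_pow, pow_right_comm]; ring
    rw [Finset.sum_congr rfl e1, Finset.sum_comm, Finset.mul_sum, ← Finset.sum_sub_distrib]
    refine Finset.sum_congr rfl fun k _ => ?_
    rw [← Finset.sum_mul, sub_mul, ← mul_assoc]
    congr 1
    rw [← mul_assoc, ← mul_pow, zero_mul]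
  rw [key]
  refine (norm_sum_le_of_le _ ?_).trans_eq (Finset.sum_div _ _ _).symm
  intro k _
  rcases Nat.eq_zero_or_pos k with hk | hk
  · subst hk
    have hzero : (n:ℂ)⁻¹ * (∑ m ∈ Finset.Icc 1 n, (lam ^ 0) ^ m) - (0:ℂ) ^ 0 = 0 := by
      simp only [pow_zero, one_pow, Finset.sum_const, Nat.card_Icc, Nat.add_sub_cancel,
        nsmul_eq_mul, mul_one]
      have : (n:ℂ) ≠ 0 := Nat.cast_ne_zero.2 (by omega)
      field_simp
      norm_num
    rw [hzero, zero_mul, norm_zero]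
    simp only [pow_zero, sub_self, norm_zero, div_zero, mul_zero, zero_div]
    exact le_rfl
  · have hμ1 : ‖lam ^ k‖ = 1 := by rw [norm_pow, hlam, one_pow]
    have hμne : lam ^ k ≠ 1 := hnotroot k hk
    have h0 : (0:ℂ) ^ k = 0 := zero_pow (by omega)
    rw [h0, sub_zero, norm_mul, norm_mul, norm_mul, norm_inv, Complex.norm_natCast, norm_pow]
    have hS := geom_bound (lam ^ k) hμ1 hμne n
    have hzk : ‖z‖ ^ k ≤ 1 := pow_le_one₀ (norm_nonneg z) hz
    calc (n:ℝ)⁻¹ * ‖∑ m ∈ Finset.Icc 1 n, (lam ^ k) ^ m‖ * (‖z‖ ^ k * ‖c k‖)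
        ≤ (n:ℝ)⁻¹ * (2 / ‖lam ^ k - 1‖) * (1 * ‖c k‖) := by gcongr
      _ = ‖c k‖ * (2 / ‖lam ^ k - 1‖) / n := by rw [div_eq_mul_inv, div_eq_mul_inv]; ring

theorem main_part (lam : ℂ) (hlam : ‖lam‖ = 1)
    (hnotroot : ∀ j : ℕ, 0 < j → lam ^ j ≠ 1) :
    ∀ f : ℂ → ℂ, IsDiscAlg f →
      TendstoUniformlyOn (cesaro (fun w => lam * w) f) (fun _ => f 0)
        atTop (closedBall (0:ℂ) 1) := by
  intro f hf
  rw [Metric.tendstoUniformlyOn_iff]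
  intro ε hε
  have hε8 : 0 < ε / 8 := by positivity
  -- uniform continuity
  have huc : UniformContinuousOn f (closedBall (0:ℂ) 1) :=
    (isCompact_closedBall _ _).uniformContinuousOn_of_continuous hf.1
  obtain ⟨δ, hδ, hδ'⟩ := Metric.uniformContinuousOn_iff.1 huc (ε/8) hε8
  -- dilation parameter
  set r : ℝ := max (1/2) (1 - δ/2) with hrdef
  have hr0 : 0 < r := lt_of_lt_of_le (by norm_num) (le_max_left _ _)
  have hr1 : r < 1 := max_lt (by norm_num) (by linarith)
  have hrδ : 1 - r < δ := by
    have := le_max_right (1/2) (1 - δ/2)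
    rw [← hrdef] at this
    linarith
  set g : ℂ → ℂ := fun z => f ((r:ℂ) * z) with hgdef
  have hnr : ‖(r:ℂ)‖ = r := by
    rw [Complex.norm_real, Real.norm_eq_abs, _root_.abs_of_pos hr0]
  have hgf : ∀ w ∈ closedBall (0:ℂ) 1, ‖f w - g w‖ ≤ ε/8 := by
    intro w hw
    have hw1 : ‖w‖ ≤ 1 := by simpa [mem_closedBall, dist_zero_right] using hw
    have hrw : (r:ℂ) * w ∈ closedBall (0:ℂ) 1 := by
      simp only [mem_closedBall, dist_zero_right, norm_mul, hnr]
      nlinarith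
    have hd : dist w ((r:ℂ) * w) < δ := by
      rw [dist_eq_norm]
      have : w - (r:ℂ) * w = ((1:ℝ) - r : ℝ) * w := by push_cast; ring
      rw [this, norm_mul]
      have hn1 : ‖(((1:ℝ) - r : ℝ) : ℂ)‖ = 1 - r := by
        rw [Complex.norm_real, Real.norm_eq_abs, _root_.abs_of_nonneg (by linarith)]
      rw [hn1]
      nlinarith [norm_nonneg w]
    have := hδ' w hw ((r:ℂ) * w) hrw hd
    rw [dist_eq_norm] at this
    exact this.le
  -- power series for g
  have h1r : 1 < 1 / r := by rw [lt_div_iff₀ hr0]; linarith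
  set R' : ℝ := (1 + 1/r)/2 with hR'def
  have hR'1 : 1 < R' := by rw [hR'def]; linarith
  have hR'r : R' < 1/r := by rw [hR'def]; linarith
  have hgd : DifferentiableOn ℂ g (closedBall (0:ℂ) R'.toNNReal) := by
    have hball : DifferentiableOn ℂ g (ball (0:ℂ) (1/r)) := by
      apply DifferentiableOn.comp (t := ball (0:ℂ) 1) hf.2
      · exact (differentiableOn_id.const_mul _)
      · intro w hw
        simp only [mem_ball, dist_zero_right] at hw ⊢
        rw [norm_mul, hnr]
        calc r * ‖w‖ < r * (1/r) := by gcongr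
          _ = 1 := by field_simp
    apply hball.mono
    intro w hw
    simp only [mem_closedBall, dist_zero_right] at hw
    simp only [mem_ball, dist_zero_right]
    have : (R'.toNNReal : ℝ) = R' := Real.coe_toNNReal _ (by linarith)
    rw [this] at hw
    linarith
  have hRpos : (0:ℝ≥0) < R'.toNNReal := Real.toNNReal_pos.2 (by linarith)
  have hps := hgd.hasFPowerSeriesOnBall hRpos
  set p := cauchyPowerSeries g 0 R'.toNNReal with hpdef
  set r'' : ℝ := (1 + R')/2 with hr''def
  have hr''1 : 1 < r'' := by rw [hr''def]; linarith
  have hr''R : r'' < R' := by rw [hr''def]; linarith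
  have hlt : ((r''.toNNReal : ℝ≥0) : ℝ≥0∞) < ((R'.toNNReal : ℝ≥0) : ℝ≥0∞) := by
    rw [ENNReal.coe_lt_coe]
    exact (Real.toNNReal_lt_toNNReal_iff (by linarith)).mpr hr''R
  have huni := hps.tendstoUniformlyOn hlt
  obtain ⟨N, hN⟩ := Filter.eventually_atTop.1
    (Metric.tendstoUniformlyOn_iff.1 huni (ε/8) hε8)
  have hNN := hN N le_rfl
  set c : ℕ → ℂ := fun k => p.coeff k with hcdef
  set P : ℂ → ℂ := fun w => ∑ k ∈ Finset.range N, w ^ k * c k with hPdef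
  have hPS : ∀ y : ℂ, p.partialSum N y = P y := by
    intro y
    unfold FormalMultilinearSeries.partialSum
    exact Finset.sum_congr rfl fun k _ => by
      rw [p.apply_eq_pow_smul_coeff, smul_eq_mul]
  have hsub : closedBall (0:ℂ) 1 ⊆ ball (0:ℂ) (r''.toNNReal : ℝ) := by
    intro w hw
    simp only [mem_closedBall, dist_zero_right] at hw
    simp only [mem_ball, dist_zero_right]
    rw [Real.coe_toNNReal _ (by linarith)]
    linarith
  have hgP : ∀ w ∈ closedBall (0:ℂ) 1, ‖g w - P w‖ ≤ ε/8 := by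
    intro w hw
    have := hNN w (hsub hw)
    rw [zero_add, hPS, dist_eq_norm] at this
    exact this.le
  have hg0 : g 0 = f 0 := by rw [hgdef]; simp
  have hP0 : ‖P 0 - f 0‖ ≤ ε/8 := by
    rw [← hg0, norm_sub_rev]
    exact hgP 0 (mem_closedBall_self (by norm_num))
  -- choose N0
  set C : ℝ := ∑ k ∈ Finset.range N, ‖c k‖ * (2 / ‖lam ^ k - 1‖) with hCdef
  obtain ⟨N0, hN0⟩ := exists_nat_ge (C / (ε/8))
  filter_upwards [eventually_ge_atTop (max N0 1)] with n hn
  intro z hz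
  have hn1 : 1 ≤ n := le_trans (le_max_right _ _) hn
  have hnN0 : (N0:ℝ) ≤ n := by exact_mod_cast le_trans (le_max_left _ _) hn
  have hnpos : (0:ℝ) < n := by exact_mod_cast hn1
  have hz1 : ‖z‖ ≤ 1 := by simpa [mem_closedBall, dist_zero_right] using hz
  have hCn : C / n ≤ ε / 8 := by
    rw [div_le_iff₀ hnpos]
    have hC0 : C / (ε/8) ≤ n := le_trans hN0 hnN0
    calc C = (C / (ε/8)) * (ε/8) := by field_simp
      _ ≤ n * (ε/8) := by gcongr
      _ = ε/8 * n := by ring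
  have hb1 : ‖cesaro (fun w => lam * w) f n z - cesaro (fun w => lam * w) g n z‖ ≤ ε/8 :=
    cesaro_sub_bound lam hlam f g (ε/8) hgf hn1 hz
  have hb2 : ‖cesaro (fun w => lam * w) g n z - cesaro (fun w => lam * w) P n z‖ ≤ ε/8 :=
    cesaro_sub_bound lam hlam g P (ε/8) hgP hn1 hz
  have hb3 : ‖cesaro (fun w => lam * w) P n z - P 0‖ ≤ ε/8 := by
    have hP00 : P 0 = ∑ k ∈ Finset.range N, (0:ℂ) ^ k * c k := rfl
    have := poly_cesaro_bound lam hlam hnotroot c N hn1 hz1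
    rw [hPdef]
    refine le_trans ?_ hCn
    simpa [hP00] using this
  rw [dist_comm, dist_eq_norm]
  have e : cesaro (fun w => lam * w) f n z - f 0
      = (cesaro (fun w => lam * w) f n z - cesaro (fun w => lam * w) g n z)
        + (cesaro (fun w => lam * w) g n z - cesaro (fun w => lam * w) P n z)
        + (cesaro (fun w => lam * w) P n z - P 0) + (P 0 - f 0) := by ring
  calc ‖cesaro (fun w => lam * w) f n z - f 0‖
      = ‖_ + _ + _ + _‖ := by rw [e]
    _ ≤ ‖_ + _ + _‖ + ‖P 0 - f 0‖ := norm_add_le _ _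
    _ ≤ ‖_ + _‖ + ‖cesaro (fun w => lam * w) P n z - P 0‖ + ‖P 0 - f 0‖ := by
        gcongr; exact norm_add_le _ _
    _ ≤ ‖cesaro (fun w => lam * w) f n z - cesaro (fun w => lam * w) g n z‖
        + ‖cesaro (fun w => lam * w) g n z - cesaro (fun w => lam * w) P n z‖
        + ‖cesaro (fun w => lam * w) P n z - P 0‖ + ‖P 0 - f 0‖ := by
        gcongr; exact norm_add_le _ _
    _ ≤ ε/8 + ε/8 + ε/8 + ε/8 := by gcongr
    _ < ε := by linarith


/-- **Rotation symbol, irrational case, on `A(𝔻)`.** If `|λ| = 1` and `λ` is not a root of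
unity, then for `φ(z) = λz` the composition operator `C_φ : A(𝔻) → A(𝔻)` is mean ergodic
and its Cesàro means converge in the sup norm to the constant function `f(0)`. -/
theorem stmt_1 (lam : ℂ) (hlam : ‖lam‖ = 1) (hnotroot : ∀ j : ℕ, 0 < j → lam ^ j ≠ 1) :
    MeanErgodicDiscAlg (fun w => lam * w) ∧
    ∀ f : ℂ → ℂ, IsDiscAlg f →
      TendstoUniformlyOn (cesaro (fun w => lam * w) f) (fun _ => f 0)
        atTop (closedBall (0:ℂ) 1) :=
  ⟨fun f hf => ⟨fun _ => f 0, main_part lam hlam hnotroot f hf⟩,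
   main_part lam hlam hnotroot⟩
end
end

section
/- Let λ ∈ ℂ with |λ| = 1 and suppose λ is not a root of unity. Consider the symbol φ(z) = λz. Then the composition operator C_φ : H^∞(𝔻) → H^∞(𝔻) is not mean ergodic: there exists f ∈ H^∞(𝔻) for which the Cesàro means (C_φ)_[n] f do not converge in the norm of H^∞(𝔻). -/
open Metric Set Filter Complex
open scoped Topology Classical

noncomputable section

namespace Stmt3Aux

lemma norm_prod_le_one {ι : Type*} (s : Finset ι) (g : ι → ℂ) (h : ∀ i ∈ s, ‖g i‖ ≤ 1) :
    ‖∏ i ∈ s, g i‖ ≤ 1 := by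
  rw [norm_prod]
  exact Finset.prod_le_one (fun i _ => norm_nonneg _) h

lemma norm_prod_sub_one_le {ι : Type*} (s : Finset ι) (g : ι → ℂ)
    (h : ∀ i ∈ s, ‖g i‖ ≤ 1) : ‖(∏ i ∈ s, g i) - 1‖ ≤ ∑ i ∈ s, ‖g i - 1‖ := by
  classical
  induction s using Finset.cons_induction with
  | empty => simp
  | cons a s ha ih =>
    rw [Finset.prod_cons, Finset.sum_cons]
    have h1 : ‖g a‖ ≤ 1 := h a (Finset.mem_cons_self a s)
    have h2 := ih (fun i hi => h i (Finset.mem_cons_of_mem hi))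
    have key : g a * (∏ i ∈ s, g i) - 1 = g a * ((∏ i ∈ s, g i) - 1) + (g a - 1) := by ring
    rw [key]
    calc ‖g a * ((∏ i ∈ s, g i) - 1) + (g a - 1)‖
        ≤ ‖g a * ((∏ i ∈ s, g i) - 1)‖ + ‖g a - 1‖ := norm_add_le _ _
      _ = ‖g a‖ * ‖(∏ i ∈ s, g i) - 1‖ + ‖g a - 1‖ := by rw [norm_mul]
      _ ≤ 1 * ‖(∏ i ∈ s, g i) - 1‖ + ‖g a - 1‖ := by gcongr
      _ ≤ ‖g a - 1‖ + ∑ i ∈ s, ‖g i - 1‖ := by rw [one_mul]; linarith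

lemma geom_sum_Ioc_le (J J' : ℕ) : ∑ j ∈ Finset.Ioc J J', ((2:ℝ)⁻¹) ^ j ≤ (2:ℝ)⁻¹ ^ J := by
  rcases le_or_gt J' J with h | h
  · rw [Finset.Ioc_eq_empty (by omega), Finset.sum_empty]
    positivity
  · have key : ∀ n, J ≤ n → ∑ j ∈ Finset.Ioc J n, ((2:ℝ)⁻¹) ^ j = (2:ℝ)⁻¹ ^ J - (2:ℝ)⁻¹ ^ n := by
      intro n hn
      induction n, hn using Nat.le_induction with
      | base => simp
      | succ n hn ih =>
        rw [Finset.sum_Ioc_succ_top hn, ih]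
        ring
    rw [key J' h.le]
    have : (0:ℝ) ≤ (2:ℝ)⁻¹ ^ J' := by positivity
    linarith


def mu (lam : ℂ) : ℂ := (starRingEnd ℂ) lam

def Rr (j : ℕ) : ℝ := 1 - (4:ℝ)⁻¹ ^ (j+1)

lemma Rr_lt_one (j : ℕ) : Rr j < 1 := by
  have : (0:ℝ) < (4:ℝ)⁻¹ ^ (j+1) := by positivity
  simp only [Rr]; linarith

lemma Rr_big (j : ℕ) : (1:ℝ)/2 ≤ Rr j := by
  have : (4:ℝ)⁻¹ ^ (j+1) ≤ (4:ℝ)⁻¹ ^ 1 := by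
    apply pow_le_pow_of_le_one (by norm_num) (by norm_num) (by omega)
  simp only [Rr, pow_one] at *
  linarith

lemma Rr_pos (j : ℕ) : (0:ℝ) < Rr j := lt_of_lt_of_le (by norm_num) (Rr_big j)

lemma one_sub_Rr (j : ℕ) : 1 - Rr j = (4:ℝ)⁻¹ ^ (j+1) := by simp [Rr]

lemma norm_mu (lam : ℂ) (hlam : ‖lam‖ = 1) : ‖mu lam‖ = 1 := by
  simp [mu, hlam]

lemma mu_mul_lam (lam : ℂ) (hlam : ‖lam‖ = 1) : mu lam * lam = 1 := by
  have h := Complex.mul_conj lam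
  have h2 : Complex.normSq lam = 1 := by
    rw [Complex.normSq_eq_norm_sq, hlam]; norm_num
  rw [mu, mul_comm, h, h2]
  norm_num

def Fct (lam : ℂ) (j m : ℕ) (z : ℂ) : ℂ :=
  ((Rr j : ℂ) - mu lam ^ m * z) / (1 - (Rr j : ℂ) * (mu lam ^ m * z))

lemma norm_muz (lam : ℂ) (hlam : ‖lam‖ = 1) (m : ℕ) (z : ℂ) : ‖mu lam ^ m * z‖ = ‖z‖ := by
  rw [norm_mul, norm_pow, norm_mu lam hlam, one_pow, one_mul]

lemma norm_Rr_le_one (j : ℕ) : ‖((Rr j : ℝ) : ℂ)‖ ≤ 1 := by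
  rw [Complex.norm_real, Real.norm_eq_abs, abs_of_pos (Rr_pos j)]
  exact (Rr_lt_one j).le

lemma denom_lb (j : ℕ) (w : ℂ) (hw : ‖w‖ < 1) :
    1 - ‖w‖ ≤ ‖1 - (Rr j : ℂ) * w‖ := by
  have h1 : ‖(Rr j : ℂ) * w‖ ≤ ‖w‖ := by
    rw [norm_mul]
    nlinarith [norm_nonneg w, norm_Rr_le_one j, norm_nonneg ((Rr j : ℝ) : ℂ)]
  calc 1 - ‖w‖ ≤ 1 - ‖(Rr j : ℂ) * w‖ := by linarith
    _ ≤ ‖1 - (Rr j : ℂ) * w‖ := by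
        have := norm_sub_norm_le (1 : ℂ) ((Rr j : ℂ) * w)
        simpa using this

lemma denom_pos (j : ℕ) (w : ℂ) (hw : ‖w‖ < 1) :
    0 < ‖1 - (Rr j : ℂ) * w‖ := lt_of_lt_of_le (by linarith) (denom_lb j w hw)

lemma denom_ne (j : ℕ) (w : ℂ) (hw : ‖w‖ < 1) :
    1 - (Rr j : ℂ) * w ≠ 0 := by
  intro h
  have := denom_pos j w hw
  rw [h, norm_zero] at this
  exact lt_irrefl _ this

lemma norm_Fct_le_one (lam : ℂ) (hlam : ‖lam‖ = 1) (j m : ℕ) (z : ℂ) (hz : ‖z‖ < 1) :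
    ‖Fct lam j m z‖ ≤ 1 := by
  set w := mu lam ^ m * z with hwdef
  have hw : ‖w‖ < 1 := by rw [hwdef, norm_muz lam hlam]; exact hz
  rw [Fct, ← hwdef, norm_div, div_le_one (denom_pos j w hw)]
  have key : Complex.normSq ((Rr j : ℂ) - w) ≤ Complex.normSq (1 - (Rr j : ℂ) * w) := by
    have hR1 : Rr j ≤ 1 := (Rr_lt_one j).le
    have hR0 : 0 ≤ Rr j := (Rr_pos j).le
    have hwsq : Complex.normSq w < 1 := by
      rw [Complex.normSq_eq_norm_sq]
      nlinarith [norm_nonneg w]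
    simp only [Complex.normSq_apply, Complex.sub_re, Complex.sub_im, Complex.mul_re,
      Complex.mul_im, Complex.one_re, Complex.one_im, Complex.ofReal_re, Complex.ofReal_im] at *
    nlinarith [hwsq, hR1, hR0, mul_nonneg (by nlinarith : (0:ℝ) ≤ 1 - Rr j * Rr j)
      (by nlinarith : (0:ℝ) ≤ 1 - (w.re * w.re + w.im * w.im))]
  have := Real.sqrt_le_sqrt key
  rwa [← Complex.norm_def, ← Complex.norm_def] at this

lemma norm_one_sub_Fct (lam : ℂ) (hlam : ‖lam‖ = 1) (j m : ℕ) (z : ℂ) (hz : ‖z‖ < 1) :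
    ‖1 - Fct lam j m z‖ ≤ 2 * (1 - Rr j) / (1 - ‖z‖) := by
  set w := mu lam ^ m * z with hwdef
  have hw : ‖w‖ < 1 := by rw [hwdef, norm_muz lam hlam]; exact hz
  have hne : 1 - (Rr j : ℂ) * w ≠ 0 := denom_ne j w hw
  have key : 1 - Fct lam j m z =
      ((1 : ℂ) - (Rr j : ℂ)) * (1 + w) / (1 - (Rr j : ℂ) * w) := by
    rw [Fct, ← hwdef]
    field_simp
    ring
  rw [key, norm_div, norm_mul]
  have h1 : ‖(1:ℂ) - (Rr j : ℂ)‖ = 1 - Rr j := by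
    rw [show (1:ℂ) - (Rr j : ℂ) = ((1 - Rr j : ℝ) : ℂ) by push_cast; ring,
      Complex.norm_real, Real.norm_eq_abs, abs_of_pos]
    linarith [Rr_lt_one j]
  have h2 : ‖(1:ℂ) + w‖ ≤ 2 := by
    calc ‖(1:ℂ) + w‖ ≤ ‖(1:ℂ)‖ + ‖w‖ := norm_add_le _ _
      _ ≤ 2 := by rw [norm_one]; linarith
  rw [h1]
  have hwz : ‖w‖ = ‖z‖ := by rw [hwdef, norm_muz lam hlam]
  have hd : 1 - ‖z‖ ≤ ‖1 - (Rr j : ℂ) * w‖ := by rw [← hwz]; exact denom_lb j w hw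
  have hnum : (1 - Rr j) * ‖1 + w‖ ≤ 2 * (1 - Rr j) := by nlinarith [Rr_lt_one j]
  exact div_le_div₀ (by nlinarith [Rr_lt_one j]) hnum (by linarith) hd


def Lev (lam : ℂ) (j : ℕ) (z : ℂ) : ℂ := ∏ m ∈ Finset.Icc 1 j, Fct lam j m z

def Qp (lam : ℂ) (J : ℕ) (z : ℂ) : ℂ := ∏ j ∈ Finset.Ioc 0 J, Lev lam j z

def Bf (lam : ℂ) (z : ℂ) : ℂ := limUnder atTop (fun J => Qp lam J z)

variable {lam : ℂ} {z : ℂ}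

lemma norm_Lev_le_one (hlam : ‖lam‖ = 1) (j : ℕ) (hz : ‖z‖ < 1) : ‖Lev lam j z‖ ≤ 1 :=
  norm_prod_le_one _ _ (fun m _ => norm_Fct_le_one lam hlam j m z hz)

lemma norm_Qp_le_one (hlam : ‖lam‖ = 1) (J : ℕ) (hz : ‖z‖ < 1) : ‖Qp lam J z‖ ≤ 1 :=
  norm_prod_le_one _ _ (fun j _ => norm_Lev_le_one hlam j hz)

lemma norm_one_sub_Lev (hlam : ‖lam‖ = 1) (j : ℕ) (hz : ‖z‖ < 1) :
    ‖1 - Lev lam j z‖ ≤ (2:ℝ)⁻¹ ^ j * (2 * (1 - ‖z‖))⁻¹ := by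
  rw [norm_sub_rev]
  have h1 : ‖Lev lam j z - 1‖ ≤ ∑ m ∈ Finset.Icc 1 j, ‖Fct lam j m z - 1‖ :=
    norm_prod_sub_one_le _ _ (fun m _ => norm_Fct_le_one lam hlam j m z hz)
  have h2 : ∑ m ∈ Finset.Icc 1 j, ‖Fct lam j m z - 1‖ ≤ (j:ℝ) * (2 * (1 - Rr j) / (1 - ‖z‖)) := by
    calc ∑ m ∈ Finset.Icc 1 j, ‖Fct lam j m z - 1‖
        ≤ ∑ m ∈ Finset.Icc 1 j, (2 * (1 - Rr j) / (1 - ‖z‖)) := by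
          apply Finset.sum_le_sum
          intro m _
          rw [norm_sub_rev]
          exact norm_one_sub_Fct lam hlam j m z hz
      _ = (j:ℝ) * (2 * (1 - Rr j) / (1 - ‖z‖)) := by
          rw [Finset.sum_const, Nat.card_Icc]
          simp
  have harith : (j:ℝ) * (2 * (1 - Rr j) / (1 - ‖z‖)) ≤ (2:ℝ)⁻¹ ^ j * (2 * (1 - ‖z‖))⁻¹ := by
    rw [one_sub_Rr]
    have hj2 : (j:ℝ) ≤ 2 ^ j := by
      exact_mod_cast (Nat.lt_two_pow_self (n := j)).le
    have hz1 : 0 < 1 - ‖z‖ := by linarith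
    have h4 : ((4:ℝ))⁻¹ ^ (j+1) = (2:ℝ)⁻¹ ^ j * (2:ℝ)⁻¹ ^ j * 4⁻¹ := by
      rw [pow_succ]
      have : ((4:ℝ))⁻¹ ^ j = ((2:ℝ)⁻¹ * (2:ℝ)⁻¹) ^ j := by norm_num
      rw [this, mul_pow]
    rw [h4]
    have hpow : (0:ℝ) < (2:ℝ)⁻¹ ^ j := by positivity
    have key : (j:ℝ) * (2:ℝ)⁻¹ ^ j ≤ 1 := by
      rw [inv_pow, mul_inv_le_iff₀ (by positivity)]
      simpa using hj2
    rw [mul_div_assoc',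
      show (2:ℝ)⁻¹ ^ j * (2 * (1 - ‖z‖))⁻¹ = ((2:ℝ)⁻¹ ^ j / 2) / (1 - ‖z‖) by
        rw [div_div, div_eq_mul_inv],
      div_le_div_iff_of_pos_right hz1]
    nlinarith [mul_le_mul_of_nonneg_right key hpow.le, hpow]
  linarith


variable {lam : ℂ} {z : ℂ}

lemma Qp_sub_le (hlam : ‖lam‖ = 1) (hz : ‖z‖ < 1) {J J' : ℕ} (h : J ≤ J') :
    ‖Qp lam J' z - Qp lam J z‖ ≤ (1 - ‖z‖)⁻¹ * (2:ℝ)⁻¹ ^ J := by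
  have hsplit : Qp lam J' z = Qp lam J z * ∏ j ∈ Finset.Ioc J J', Lev lam j z := by
    rw [Qp, Qp, Finset.prod_Ioc_consecutive _ (Nat.zero_le J) h]
  rw [hsplit]
  have e : Qp lam J z * (∏ j ∈ Finset.Ioc J J', Lev lam j z) - Qp lam J z
      = Qp lam J z * ((∏ j ∈ Finset.Ioc J J', Lev lam j z) - 1) := by ring
  rw [e, norm_mul]
  have h1 : ‖(∏ j ∈ Finset.Ioc J J', Lev lam j z) - 1‖
      ≤ ∑ j ∈ Finset.Ioc J J', ‖Lev lam j z - 1‖ :=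
    norm_prod_sub_one_le _ _ (fun j _ => norm_Lev_le_one hlam j hz)
  have h2 : ∑ j ∈ Finset.Ioc J J', ‖Lev lam j z - 1‖
      ≤ (2 * (1 - ‖z‖))⁻¹ * (2:ℝ)⁻¹ ^ J := by
    calc ∑ j ∈ Finset.Ioc J J', ‖Lev lam j z - 1‖
        ≤ ∑ j ∈ Finset.Ioc J J', (2:ℝ)⁻¹ ^ j * (2 * (1 - ‖z‖))⁻¹ := by
          apply Finset.sum_le_sum
          intro j _
          rw [norm_sub_rev]
          exact norm_one_sub_Lev hlam j hz
      _ = (∑ j ∈ Finset.Ioc J J', (2:ℝ)⁻¹ ^ j) * (2 * (1 - ‖z‖))⁻¹ := by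
          rw [Finset.sum_mul]
      _ ≤ (2:ℝ)⁻¹ ^ J * (2 * (1 - ‖z‖))⁻¹ := by
          apply mul_le_mul_of_nonneg_right (geom_sum_Ioc_le J J')
          apply inv_nonneg.mpr
          nlinarith
      _ = (2 * (1 - ‖z‖))⁻¹ * (2:ℝ)⁻¹ ^ J := by ring
  have h3 : ‖Qp lam J z‖ ≤ 1 := norm_Qp_le_one hlam J hz
  have h4 : (0:ℝ) ≤ ‖(∏ j ∈ Finset.Ioc J J', Lev lam j z) - 1‖ := norm_nonneg _
  have h5 : (2 * (1 - ‖z‖))⁻¹ * (2:ℝ)⁻¹ ^ J ≤ (1 - ‖z‖)⁻¹ * (2:ℝ)⁻¹ ^ J := by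
    have hz1 : (0:ℝ) < 1 - ‖z‖ := by linarith
    have : (2 * (1 - ‖z‖))⁻¹ ≤ (1 - ‖z‖)⁻¹ := by
      apply inv_anti₀ hz1
      linarith
    apply mul_le_mul_of_nonneg_right this (by positivity)
  nlinarith [norm_nonneg (Qp lam J z)]

lemma cauchy_Qp (hlam : ‖lam‖ = 1) (hz : ‖z‖ < 1) : CauchySeq (fun J => Qp lam J z) := by
  apply cauchySeq_of_le_geometric 2⁻¹ ((1 - ‖z‖)⁻¹) (by norm_num)
  intro n
  rw [dist_eq_norm, norm_sub_rev]
  exact Qp_sub_le hlam hz (Nat.le_succ n)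

lemma tendsto_Qp_Bf (hlam : ‖lam‖ = 1) (hz : ‖z‖ < 1) :
    Tendsto (fun J => Qp lam J z) atTop (𝓝 (Bf lam z)) :=
  (cauchy_Qp hlam hz).tendsto_limUnder

lemma norm_Qp_sub_Bf (hlam : ‖lam‖ = 1) (hz : ‖z‖ < 1) (J : ℕ) :
    ‖Qp lam J z - Bf lam z‖ ≤ (1 - ‖z‖)⁻¹ * (2:ℝ)⁻¹ ^ J := by
  have ht : Tendsto (fun J' => ‖Qp lam J z - Qp lam J' z‖) atTop
      (𝓝 ‖Qp lam J z - Bf lam z‖) :=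
    ((tendsto_const_nhds.sub (tendsto_Qp_Bf hlam hz)).norm)
  apply le_of_tendsto ht
  filter_upwards [eventually_ge_atTop J] with J' hJ'
  rw [norm_sub_rev]
  exact Qp_sub_le hlam hz hJ'

lemma norm_Bf_le_one (hlam : ‖lam‖ = 1) (hz : ‖z‖ < 1) : ‖Bf lam z‖ ≤ 1 := by
  apply le_of_tendsto (tendsto_Qp_Bf hlam hz).norm
  filter_upwards with J using norm_Qp_le_one hlam J hz


lemma Qp_diffOn (hlam : ‖lam‖ = 1) (J : ℕ) : DifferentiableOn ℂ (Qp lam J) (ball (0:ℂ) 1) := by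
  apply DifferentiableOn.fun_finset_prod
  intro j _
  apply DifferentiableOn.fun_finset_prod
  intro m _
  apply DifferentiableOn.div
  · apply DifferentiableOn.const_sub
    exact (differentiableOn_id.const_mul _)
  · apply DifferentiableOn.const_sub
    apply DifferentiableOn.const_mul
    exact (differentiableOn_id.const_mul _)
  · intro x hx
    simp only [mem_ball, dist_zero_right] at hx
    have : ‖mu lam ^ m * x‖ < 1 := by rw [norm_muz lam hlam]; exact hx
    exact denom_ne j _ this

lemma Bf_diffOn (hlam : ‖lam‖ = 1) : DifferentiableOn ℂ (Bf lam) (ball (0:ℂ) 1) := by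
  apply TendstoLocallyUniformlyOn.differentiableOn
    (F := fun J => Qp lam J) (φ := atTop) ?_ ?_ isOpen_ball
  · rw [tendstoLocallyUniformlyOn_iff]
    intro ε hε x hx
    simp only [mem_ball, dist_zero_right] at hx
    have hρpos : 0 < (1 - ‖x‖) / 2 := by linarith
    refine ⟨ball (0:ℂ) 1 ∩ ball x ((1 - ‖x‖)/2),
      inter_mem_nhdsWithin _ (ball_mem_nhds x hρpos), ?_⟩
    have hC : ∀ y ∈ ball (0:ℂ) 1 ∩ ball x ((1 - ‖x‖)/2),
        ‖y‖ < 1 ∧ (1 - ‖y‖)⁻¹ ≤ 2 / (1 - ‖x‖) := by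
      intro y hy
      have hy1 : ‖y‖ < 1 := by
        have := mem_ball.mp hy.1
        rwa [dist_zero_right] at this
      refine ⟨hy1, ?_⟩
      have h2 : dist y x < (1 - ‖x‖)/2 := mem_ball.mp hy.2
      have h3 : ‖y‖ - ‖x‖ ≤ ‖y - x‖ := norm_sub_norm_le y x
      rw [dist_eq_norm] at h2
      have h4 : (1 - ‖x‖)/2 ≤ 1 - ‖y‖ := by linarith
      have h5 : ((1 - ‖x‖)/2)⁻¹ = 2 / (1 - ‖x‖) := by
        rw [inv_div]
      rw [← h5]
      exact inv_anti₀ hρpos h4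
    have htend : Tendsto (fun J : ℕ => (2 / (1 - ‖x‖)) * (2:ℝ)⁻¹ ^ J) atTop (𝓝 0) := by
      have := tendsto_pow_atTop_nhds_zero_of_lt_one (by norm_num : (0:ℝ) ≤ 2⁻¹)
        (by norm_num : (2:ℝ)⁻¹ < 1)
      simpa using this.const_mul (2 / (1 - ‖x‖))
    have hev : ∀ᶠ J : ℕ in atTop, (2 / (1 - ‖x‖)) * (2:ℝ)⁻¹ ^ J < ε := by
      have := htend.eventually (eventually_lt_nhds hε)
      simpa using this
    filter_upwards [hev] with J hJ y hy
    have hCy := hC y hy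
    rw [dist_eq_norm, norm_sub_rev]
    calc ‖Qp lam J y - Bf lam y‖ ≤ (1 - ‖y‖)⁻¹ * (2:ℝ)⁻¹ ^ J :=
          norm_Qp_sub_Bf hlam hCy.1 J
      _ ≤ (2 / (1 - ‖x‖)) * (2:ℝ)⁻¹ ^ J := by
          apply mul_le_mul_of_nonneg_right hCy.2 (by positivity)
      _ < ε := hJ
  · filter_upwards with J using Qp_diffOn hlam J


lemma norm_point (hlam : ‖lam‖ = 1) (m j : ℕ) : ‖lam ^ m * ((Rr j : ℝ) : ℂ)‖ = Rr j := by
  rw [norm_mul, norm_pow, hlam, one_pow, one_mul, Complex.norm_real, Real.norm_eq_abs,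
    abs_of_pos (Rr_pos j)]

lemma point_mem_ball (hlam : ‖lam‖ = 1) (m j : ℕ) :
    lam ^ m * ((Rr j : ℝ) : ℂ) ∈ ball (0:ℂ) 1 := by
  rw [mem_ball, dist_zero_right, norm_point hlam]
  exact Rr_lt_one j

lemma Fct_vanish (hlam : ‖lam‖ = 1) (j m : ℕ) :
    Fct lam j m (lam ^ m * ((Rr j : ℝ) : ℂ)) = 0 := by
  rw [Fct]
  apply div_eq_zero_iff.mpr
  left
  have : mu lam ^ m * (lam ^ m * ((Rr j : ℝ) : ℂ)) = ((Rr j : ℝ) : ℂ) := by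
    rw [← mul_assoc, ← mul_pow, mu_mul_lam lam hlam, one_pow, one_mul]
  rw [this, sub_self]

lemma Bf_vanish (hlam : ‖lam‖ = 1) {j m : ℕ} (hm : m ∈ Finset.Icc 1 j) :
    Bf lam (lam ^ m * ((Rr j : ℝ) : ℂ)) = 0 := by
  set x := lam ^ m * ((Rr j : ℝ) : ℂ) with hxdef
  have hx : ‖x‖ < 1 := by rw [hxdef, norm_point hlam]; exact Rr_lt_one j
  have hm' : 1 ≤ m ∧ m ≤ j := Finset.mem_Icc.mp hm
  have hev : ∀ᶠ J in atTop, Qp lam J x = 0 := by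
    filter_upwards [eventually_ge_atTop j] with J hJ
    apply Finset.prod_eq_zero (i := j)
    · rw [Finset.mem_Ioc]
      exact ⟨by omega, hJ⟩
    · apply Finset.prod_eq_zero hm
      exact Fct_vanish hlam j m
  have h0 : Tendsto (fun J => Qp lam J x) atTop (𝓝 0) :=
    Tendsto.congr' (by filter_upwards [hev] with J hJ using hJ.symm) tendsto_const_nhds
  exact tendsto_nhds_unique (tendsto_Qp_Bf hlam hx) h0

lemma Bf_zero_lb (hlam : ‖lam‖ = 1) : (1:ℝ)/2 ≤ ‖Bf lam 0‖ := by
  have hz0 : ‖(0:ℂ)‖ < 1 := by simp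
  have hQ : ∀ J, ‖1 - Qp lam J 0‖ ≤ 1/2 := by
    intro J
    rw [norm_sub_rev]
    have h1 : ‖Qp lam J 0 - 1‖ ≤ ∑ j ∈ Finset.Ioc 0 J, ‖Lev lam j 0 - 1‖ :=
      norm_prod_sub_one_le _ _ (fun j _ => norm_Lev_le_one hlam j hz0)
    have h2 : ∑ j ∈ Finset.Ioc 0 J, ‖Lev lam j 0 - 1‖ ≤ 1/2 := by
      calc ∑ j ∈ Finset.Ioc 0 J, ‖Lev lam j 0 - 1‖
          ≤ ∑ j ∈ Finset.Ioc 0 J, (2:ℝ)⁻¹ ^ j * (2 * (1 - ‖(0:ℂ)‖))⁻¹ := by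
            apply Finset.sum_le_sum
            intro j _
            rw [norm_sub_rev]
            exact norm_one_sub_Lev hlam j hz0
        _ = (∑ j ∈ Finset.Ioc 0 J, (2:ℝ)⁻¹ ^ j) * (2:ℝ)⁻¹ := by
            rw [← Finset.sum_mul]
            norm_num
        _ ≤ (2:ℝ)⁻¹ ^ 0 * (2:ℝ)⁻¹ := by
            apply mul_le_mul_of_nonneg_right (geom_sum_Ioc_le 0 J) (by norm_num)
        _ = 1/2 := by norm_num
    linarith
  have hlim : ‖1 - Bf lam 0‖ ≤ 1/2 := by
    have ht : Tendsto (fun J => ‖1 - Qp lam J 0‖) atTop (𝓝 ‖1 - Bf lam 0‖) :=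
      ((tendsto_const_nhds.sub (tendsto_Qp_Bf hlam hz0)).norm)
    apply le_of_tendsto ht
    filter_upwards with J using hQ J
  have := norm_sub_norm_le (1:ℂ) (1 - Bf lam 0)
  simp only [norm_one, sub_sub_cancel] at this
  linarith

lemma Bf_zero_ne (hlam : ‖lam‖ = 1) : Bf lam 0 ≠ 0 := by
  intro h
  have := Bf_zero_lb hlam
  rw [h, norm_zero] at this
  linarith


lemma iter_rot (lam : ℂ) (m : ℕ) (z : ℂ) : (fun w => lam * w)^[m] z = lam ^ m * z := by
  induction m with
  | zero => simp
  | succ n ih => rw [Function.iterate_succ_apply', ih, pow_succ]; ring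

-- geometric sum bound
lemma geom_sum_bound (x : ℂ) (hx : ‖x‖ = 1) (hx1 : x ≠ 1) (N : ℕ) :
    ‖∑ m ∈ Finset.Icc 1 N, x ^ m‖ ≤ 2 / ‖x - 1‖ := by
  have hne : x - 1 ≠ 0 := sub_ne_zero.mpr hx1
  have hident : ∀ n : ℕ, (x - 1) * ∑ m ∈ Finset.Icc 1 n, x ^ m = x ^ (n+1) - x := by
    intro n
    induction n with
    | zero => simp
    | succ n ih =>
      rw [Finset.sum_Icc_succ_top (by omega), mul_add, ih]
      ring
  have h2 : ∑ m ∈ Finset.Icc 1 N, x ^ m = (x ^ (N+1) - x) / (x - 1) := by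
    rw [eq_div_iff hne, ← hident N]
    ring
  rw [h2, norm_div]
  have hnum : ‖x ^ (N+1) - x‖ ≤ 2 := by
    calc ‖x ^ (N+1) - x‖ ≤ ‖x ^ (N+1)‖ + ‖x‖ := norm_sub_le _ _
      _ = 1 + 1 := by rw [norm_pow, hx]; norm_num
      _ = 2 := by norm_num
  have hden : 0 < ‖x - 1‖ := norm_pos_iff.mpr hne
  exact div_le_div₀ (by norm_num) hnum hden le_rfl


lemma cesaro_tendsto_center (lam : ℂ) (hlam : ‖lam‖ = 1)
    (hnotroot : ∀ j : ℕ, 0 < j → lam ^ j ≠ 1) (h : ℂ → ℂ)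
    (hd : DifferentiableOn ℂ h (ball (0:ℂ) 1)) (z : ℂ) (hz : ‖z‖ < 1) :
    Tendsto (fun N => cesaro (fun w => lam * w) h N z) atTop (𝓝 (h 0)) := by
  set s := ‖z‖ with hs
  have hs0 : 0 ≤ s := norm_nonneg z
  set r1 : ℝ := (1 + s) / 2 with hr1
  set r2 : ℝ := (3 + s) / 4 with hr2
  have hsr1 : s < r1 := by rw [hr1]; linarith
  have hr12 : r1 < r2 := by rw [hr1, hr2]; linarith
  have hr21 : r2 < 1 := by rw [hr2]; linarith
  have hr1pos : 0 < r1 := by rw [hr1]; linarith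
  have hr2pos : 0 < r2 := by rw [hr2]; linarith
  set r2' : NNReal := Real.toNNReal r2 with hr2'
  have hr2c : (r2' : ℝ) = r2 := Real.coe_toNNReal r2 hr2pos.le
  have hd2 : DifferentiableOn ℂ h (closedBall (0:ℂ) (r2' : ℝ)) := by
    apply hd.mono
    rw [hr2c]
    exact closedBall_subset_ball hr21
  have hps : HasFPowerSeriesOnBall h (cauchyPowerSeries h 0 (r2' : ℝ)) 0 (r2' : ENNReal) := by
    have := hd2.hasFPowerSeriesOnBall (R := r2') (by rw [← NNReal.coe_pos, hr2c]; exact hr2pos)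
    exact this
  set p := cauchyPowerSeries h 0 (r2' : ℝ) with hp
  set r1' : NNReal := Real.toNNReal r1 with hr1'
  have hr1c : (r1' : ℝ) = r1 := Real.coe_toNNReal r1 hr1pos.le
  have hlt : (r1' : ENNReal) < (r2' : ENNReal) := by
    rw [ENNReal.coe_lt_coe, ← NNReal.coe_lt_coe, hr1c, hr2c]
    exact hr12
  have hunif := hps.tendstoUniformlyOn hlt
  rw [Metric.tendsto_atTop]
  intro ε hε
  have hε4 : 0 < ε / 4 := by linarith
  -- obtain polynomial degree d
  rw [tendstoUniformlyOn_iff] at hunif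
  obtain ⟨d, hd0⟩ := (hunif (ε/4) hε4).exists_forall_of_atTop
  have hd' := hd0 d le_rfl
  -- hd' : ∀ y ∈ ball 0 r1', dist (h (0+y)) (partialSum d y) < ε/4
  set P : ℂ → ℂ := fun y => p.partialSum d y with hP
  have hPapprox : ∀ y : ℂ, ‖y‖ ≤ s → ‖h y - P y‖ < ε / 4 := by
    intro y hy
    have hmem : y ∈ ball (0:ℂ) (r1' : ℝ) := by
      rw [mem_ball, dist_zero_right, hr1c]
      linarith
    have := hd' y hmem
    rw [zero_add, dist_eq_norm] at this
    exact this
  -- coefficient data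
  set A : ℝ := ∑ k ∈ Finset.range d, 2 / ‖lam ^ k - 1‖ * ‖p.coeff k‖ with hA
  have hAnonneg : 0 ≤ A := by
    apply Finset.sum_nonneg
    intro k _
    positivity
  have hsmall : ∀ᶠ N : ℕ in atTop, A / (N:ℝ) < ε / 4 ∧ 1 ≤ N := by
    have h1 := (tendsto_const_div_atTop_nhds_zero_nat A).eventually (eventually_lt_nhds hε4)
    exact h1.and (eventually_ge_atTop 1)
  obtain ⟨N₀, hN₀⟩ := hsmall.exists_forall_of_atTop
  refine ⟨N₀, fun N hN => ?_⟩
  obtain ⟨hN1, hN2⟩ := hN₀ N hN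
  have hNpos : (0:ℝ) < N := by exact_mod_cast hN2
  have hNC : ((N:ℕ) : ℂ) ≠ 0 := by exact_mod_cast hNpos.ne'
  -- the three pieces
  set φ : ℂ → ℂ := fun w => lam * w with hφ
  have horb : ∀ m : ℕ, ‖φ^[m] z‖ = s := by
    intro m
    rw [hφ, iter_rot, norm_mul, norm_pow, hlam, one_pow, one_mul]
  -- piece 1
  have hpiece1 : ‖cesaro φ h N z - cesaro φ P N z‖ ≤ ε / 4 := by
    have he : cesaro φ h N z - cesaro φ P N z
        = (N : ℂ)⁻¹ * ∑ m ∈ Finset.Icc 1 N, (h (φ^[m] z) - P (φ^[m] z)) := by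
      rw [cesaro, cesaro, ← mul_sub, Finset.sum_sub_distrib]
    rw [he, norm_mul, norm_inv, Complex.norm_natCast]
    have hsum : ‖∑ m ∈ Finset.Icc 1 N, (h (φ^[m] z) - P (φ^[m] z))‖
        ≤ (N:ℝ) * (ε/4) := by
      calc ‖∑ m ∈ Finset.Icc 1 N, (h (φ^[m] z) - P (φ^[m] z))‖
          ≤ ∑ m ∈ Finset.Icc 1 N, ‖h (φ^[m] z) - P (φ^[m] z)‖ := norm_sum_le _ _
        _ ≤ ∑ m ∈ Finset.Icc 1 N, (ε/4) := by
            apply Finset.sum_le_sum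
            intro m _
            exact (hPapprox _ (le_of_eq (horb m))).le
        _ = (N:ℝ) * (ε/4) := by
            rw [Finset.sum_const, Nat.card_Icc]
            simp [nsmul_eq_mul]
    calc (N:ℝ)⁻¹ * ‖∑ m ∈ Finset.Icc 1 N, (h (φ^[m] z) - P (φ^[m] z))‖
        ≤ (N:ℝ)⁻¹ * ((N:ℝ) * (ε/4)) := by
          apply mul_le_mul_of_nonneg_left hsum (by positivity)
      _ = ε/4 := by field_simp
  -- piece 3
  have hpiece3 : ‖P 0 - h 0‖ ≤ ε / 4 := by
    rw [norm_sub_rev]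
    exact (hPapprox 0 (by simp [hs0])).le
  -- piece 2 : compute cesaro of P
  have hcomp : cesaro φ P N z
      = ∑ k ∈ Finset.range d,
          ((N : ℂ)⁻¹ * ∑ m ∈ Finset.Icc 1 N, (lam ^ k) ^ m) * (z ^ k * p.coeff k) := by
    rw [cesaro]
    have hterm : ∀ m ∈ Finset.Icc 1 N, P (φ^[m] z)
        = ∑ k ∈ Finset.range d, (lam ^ k) ^ m * (z ^ k * p.coeff k) := by
      intro m _
      show p.partialSum d (φ^[m] z) = _
      unfold FormalMultilinearSeries.partialSum
      apply Finset.sum_congr rfl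
      intro k _
      rw [FormalMultilinearSeries.apply_eq_pow_smul_coeff, smul_eq_mul]
      rw [hφ, iter_rot, mul_pow, ← pow_right_comm]
      ring
    rw [Finset.sum_congr rfl hterm, Finset.sum_comm]
    rw [Finset.mul_sum]
    apply Finset.sum_congr rfl
    intro k _
    rw [← Finset.sum_mul, mul_assoc]
  have hP0 : P 0 = ∑ k ∈ Finset.range d, (0:ℂ) ^ k * p.coeff k := by
    show p.partialSum d 0 = _
    unfold FormalMultilinearSeries.partialSum
    apply Finset.sum_congr rfl
    intro k _
    rw [FormalMultilinearSeries.apply_eq_pow_smul_coeff, smul_eq_mul]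
  have hpiece2 : ‖cesaro φ P N z - P 0‖ ≤ A / (N:ℝ) := by
    rw [hcomp, hP0, ← Finset.sum_sub_distrib]
    have hterm : ∀ k ∈ Finset.range d,
        ‖((N : ℂ)⁻¹ * ∑ m ∈ Finset.Icc 1 N, (lam ^ k) ^ m) * (z ^ k * p.coeff k)
          - (0:ℂ) ^ k * p.coeff k‖
        ≤ (N:ℝ)⁻¹ * (2 / ‖lam ^ k - 1‖ * ‖p.coeff k‖) := by
      intro k _
      match k with
      | 0 =>
        have hcN0 : ((N : ℂ)⁻¹ * ∑ m ∈ Finset.Icc 1 N, (lam ^ 0) ^ m) = 1 := by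
          simp only [pow_zero, one_pow, Finset.sum_const, Nat.card_Icc, Nat.add_sub_cancel,
            nsmul_eq_mul, mul_one]
          exact inv_mul_cancel₀ hNC
        rw [hcN0]
        simp
      | (k+1) =>
        have hne : lam ^ (k+1) ≠ 1 := hnotroot (k+1) (by omega)
        have hx : ‖lam ^ (k+1)‖ = 1 := by rw [norm_pow, hlam, one_pow]
        have hgeo : ‖∑ m ∈ Finset.Icc 1 N, (lam ^ (k+1)) ^ m‖ ≤ 2 / ‖lam ^ (k+1) - 1‖ :=
          geom_sum_bound _ hx hne N
        rw [zero_pow (by omega : k + 1 ≠ 0), zero_mul, sub_zero]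
        rw [norm_mul, norm_mul, norm_mul, norm_inv, Complex.norm_natCast]
        have hz1 : ‖z ^ (k+1)‖ ≤ 1 := by
          rw [norm_pow]
          apply pow_le_one₀ (norm_nonneg z)
          exact hz.le
        calc (N:ℝ)⁻¹ * ‖∑ m ∈ Finset.Icc 1 N, (lam ^ (k+1)) ^ m‖ * (‖z ^ (k+1)‖ * ‖p.coeff (k+1)‖)
            ≤ (N:ℝ)⁻¹ * (2 / ‖lam ^ (k+1) - 1‖) * (1 * ‖p.coeff (k+1)‖) := by
              apply mul_le_mul
              · apply mul_le_mul_of_nonneg_left hgeo (by positivity)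
              · apply mul_le_mul_of_nonneg_right hz1 (norm_nonneg _)
              · positivity
              · positivity
          _ = (N:ℝ)⁻¹ * (2 / ‖lam ^ (k+1) - 1‖ * ‖p.coeff (k+1)‖) := by ring
    calc ‖∑ k ∈ Finset.range d,
            (((N : ℂ)⁻¹ * ∑ m ∈ Finset.Icc 1 N, (lam ^ k) ^ m) * (z ^ k * p.coeff k)
              - (0:ℂ) ^ k * p.coeff k)‖
        ≤ ∑ k ∈ Finset.range d,
            ‖((N : ℂ)⁻¹ * ∑ m ∈ Finset.Icc 1 N, (lam ^ k) ^ m) * (z ^ k * p.coeff k)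
              - (0:ℂ) ^ k * p.coeff k‖ := norm_sum_le _ _
      _ ≤ ∑ k ∈ Finset.range d, (N:ℝ)⁻¹ * (2 / ‖lam ^ k - 1‖ * ‖p.coeff k‖) :=
          Finset.sum_le_sum hterm
      _ = (N:ℝ)⁻¹ * A := by rw [← Finset.mul_sum, hA]
      _ = A / (N:ℝ) := by rw [div_eq_mul_inv]; ring
  -- combine
  rw [dist_eq_norm]
  have e : cesaro φ h N z - h 0 = (cesaro φ h N z - cesaro φ P N z)
      + (cesaro φ P N z - P 0) + (P 0 - h 0) := by ring
  calc ‖cesaro φ h N z - h 0‖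
      ≤ ‖(cesaro φ h N z - cesaro φ P N z) + (cesaro φ P N z - P 0)‖ + ‖P 0 - h 0‖ := by
        rw [e]; exact norm_add_le _ _
    _ ≤ ‖cesaro φ h N z - cesaro φ P N z‖ + ‖cesaro φ P N z - P 0‖ + ‖P 0 - h 0‖ := by
        have := norm_add_le (cesaro φ h N z - cesaro φ P N z) (cesaro φ P N z - P 0)
        linarith
    _ < ε := by linarith


def ff (lam : ℂ) (z : ℂ) : ℂ := 1 - Bf lam z / Bf lam 0

variable {lam : ℂ}

lemma ff_IsHInf (hlam : ‖lam‖ = 1) : IsHInf (ff lam) := by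
  constructor
  · apply DifferentiableOn.const_sub
    exact (Bf_diffOn hlam).div_const _
  · refine ⟨3, fun z hz => ?_⟩
    rw [mem_ball, dist_zero_right] at hz
    have h1 : ‖Bf lam z / Bf lam 0‖ ≤ 2 := by
      rw [norm_div]
      have h2 := Bf_zero_lb hlam
      have h3 := norm_Bf_le_one hlam hz
      rw [div_le_iff₀ (by linarith)]
      linarith
    calc ‖ff lam z‖ ≤ ‖(1:ℂ)‖ + ‖Bf lam z / Bf lam 0‖ := norm_sub_le _ _
      _ ≤ 3 := by rw [norm_one]; linarith

lemma cesaro_ff_special (hlam : ‖lam‖ = 1) {j : ℕ} (hj : 1 ≤ j) :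
    cesaro (fun w => lam * w) (ff lam) j ((Rr j : ℝ) : ℂ) = 1 := by
  rw [cesaro]
  have hterm : ∀ m ∈ Finset.Icc 1 j,
      ff lam ((fun w => lam * w)^[m] ((Rr j : ℝ) : ℂ)) = 1 := by
    intro m hm
    rw [iter_rot, ff, Bf_vanish hlam hm, zero_div, sub_zero]
  rw [Finset.sum_congr rfl hterm, Finset.sum_const, Nat.card_Icc, Nat.add_sub_cancel,
    nsmul_eq_mul, mul_one]
  apply inv_mul_cancel₀
  exact_mod_cast (by omega : j ≠ 0)

lemma cesaro_ff_eq (hlam : ‖lam‖ = 1) {N : ℕ} (hN : 1 ≤ N) (z : ℂ) :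
    cesaro (fun w => lam * w) (ff lam) N z
      = 1 - cesaro (fun w => lam * w) (Bf lam) N z / Bf lam 0 := by
  rw [cesaro, cesaro]
  have : ∑ m ∈ Finset.Icc 1 N, ff lam ((fun w => lam * w)^[m] z)
      = (N : ℂ) - (∑ m ∈ Finset.Icc 1 N, Bf lam ((fun w => lam * w)^[m] z)) / Bf lam 0 := by
    rw [show (fun m => ff lam ((fun w => lam * w)^[m] z))
        = (fun m => 1 - Bf lam ((fun w => lam * w)^[m] z) / Bf lam 0) from rfl]
    rw [Finset.sum_sub_distrib, Finset.sum_const, Nat.card_Icc, Nat.add_sub_cancel,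
      nsmul_eq_mul, mul_one, Finset.sum_div]
  rw [this, mul_sub]
  have hNC : (N : ℂ) ≠ 0 := by exact_mod_cast (by omega : N ≠ 0)
  rw [inv_mul_cancel₀ hNC]
  rw [div_eq_mul_inv, div_eq_mul_inv]
  ring

lemma cesaro_ff_tendsto_zero (hlam : ‖lam‖ = 1)
    (hnotroot : ∀ j : ℕ, 0 < j → lam ^ j ≠ 1) (z : ℂ) (hz : ‖z‖ < 1) :
    Tendsto (fun N => cesaro (fun w => lam * w) (ff lam) N z) atTop (𝓝 0) := by
  have h1 : Tendsto (fun N => 1 - cesaro (fun w => lam * w) (Bf lam) N z / Bf lam 0) atTop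
      (𝓝 (1 - Bf lam 0 / Bf lam 0)) := by
    apply Tendsto.const_sub
    exact (cesaro_tendsto_center lam hlam hnotroot (Bf lam) (Bf_diffOn hlam) z hz).div_const _
  rw [div_self (Bf_zero_ne hlam), sub_self] at h1
  apply h1.congr'
  filter_upwards [eventually_ge_atTop 1] with N hN
  exact (cesaro_ff_eq hlam hN z).symm

theorem stmt_3' (lam : ℂ) (hlam : ‖lam‖ = 1) (hnotroot : ∀ j : ℕ, 0 < j → lam ^ j ≠ 1) :
    ∃ f : ℂ → ℂ, IsHInf f ∧
      ∀ g : ℂ → ℂ, ¬ TendstoUniformlyOn (cesaro (fun w => lam * w) f) g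
        atTop (ball (0:ℂ) 1) := by
  refine ⟨ff lam, ff_IsHInf hlam, fun g hg => ?_⟩
  rw [tendstoUniformlyOn_iff] at hg
  obtain ⟨N₀, hN₀⟩ := (hg (1/4) (by norm_num)).exists_forall_of_atTop
  set j : ℕ := max N₀ 1 with hj
  set x : ℂ := ((Rr j : ℝ) : ℂ) with hx
  have hxball : x ∈ ball (0:ℂ) 1 := by
    rw [hx, mem_ball, dist_zero_right, Complex.norm_real, Real.norm_eq_abs,
      abs_of_pos (Rr_pos j)]
    exact Rr_lt_one j
  have h1 : cesaro (fun w => lam * w) (ff lam) j x = 1 :=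
    cesaro_ff_special hlam (le_max_right N₀ 1)
  have hg1 : dist (g x) 1 < 1/4 := by
    have := hN₀ j (le_max_left N₀ 1) x hxball
    rwa [h1] at this
  have hxnorm : ‖x‖ < 1 := by rwa [mem_ball, dist_zero_right] at hxball
  have hpt := cesaro_ff_tendsto_zero hlam hnotroot x hxnorm
  rw [Metric.tendsto_atTop] at hpt
  obtain ⟨N₁, hN₁⟩ := hpt (1/4) (by norm_num)
  set N₂ : ℕ := max N₁ N₀ with hN₂
  have hsmall : dist (cesaro (fun w => lam * w) (ff lam) N₂ x) 0 < 1/4 :=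
    hN₁ N₂ (le_max_left _ _)
  have hg2 : dist (g x) (cesaro (fun w => lam * w) (ff lam) N₂ x) < 1/4 :=
    hN₀ N₂ (le_max_right _ _) x hxball
  have htri := dist_triangle4 (1:ℂ) (g x) (cesaro (fun w => lam * w) (ff lam) N₂ x) 0
  have hd10 : dist (1:ℂ) (0:ℂ) = 1 := by simp [dist_eq_norm]
  rw [hd10] at htri
  rw [dist_comm] at hg1
  linarith


end Stmt3Aux

/-- **Rotation symbol, irrational case: not mean ergodic on `H^∞(𝔻)`.** If `|λ| = 1` and `λ`
is not a root of unity, then for `φ(z) = λz` there exists `f ∈ H^∞(𝔻)` whose Cesàro means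
`(C_φ)_[n] f` do not converge in the norm of `H^∞(𝔻)`. -/
theorem stmt_3 (lam : ℂ) (hlam : ‖lam‖ = 1) (hnotroot : ∀ j : ℕ, 0 < j → lam ^ j ≠ 1) :
    ∃ f : ℂ → ℂ, IsHInf f ∧
      ∀ g : ℂ → ℂ, ¬ TendstoUniformlyOn (cesaro (fun w => lam * w) f) g
        atTop (ball (0:ℂ) 1) := by
  classical
  refine ⟨Stmt3Aux.ff lam, Stmt3Aux.ff_IsHInf hlam, fun g hg => ?_⟩
  rw [tendstoUniformlyOn_iff] at hg
  obtain ⟨N₀, hN₀⟩ := (hg (1/4) (by norm_num)).exists_forall_of_atTop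
  set j : ℕ := max N₀ 1 with hj
  set x : ℂ := ((Stmt3Aux.Rr j : ℝ) : ℂ) with hx
  have hxball : x ∈ ball (0:ℂ) 1 := by
    rw [hx, mem_ball, dist_zero_right, Complex.norm_real, Real.norm_eq_abs,
      abs_of_pos (Stmt3Aux.Rr_pos j)]
    exact Stmt3Aux.Rr_lt_one j
  have h1 : cesaro (fun w => lam * w) (Stmt3Aux.ff lam) j x = 1 :=
    Stmt3Aux.cesaro_ff_special hlam (le_max_right N₀ 1)
  have hg1 : dist (g x) 1 < 1/4 := by
    have := hN₀ j (le_max_left N₀ 1) x hxball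
    rwa [h1] at this
  have hxnorm : ‖x‖ < 1 := by rwa [mem_ball, dist_zero_right] at hxball
  have hpt := Stmt3Aux.cesaro_ff_tendsto_zero hlam hnotroot x hxnorm
  rw [Metric.tendsto_atTop] at hpt
  obtain ⟨N₁, hN₁⟩ := hpt (1/4) (by norm_num)
  set N₂ : ℕ := max N₁ N₀ with hN₂
  have hsmall : dist (cesaro (fun w => lam * w) (Stmt3Aux.ff lam) N₂ x) 0 < 1/4 :=
    hN₁ N₂ (le_max_left _ _)
  have hg2 : dist (g x) (cesaro (fun w => lam * w) (Stmt3Aux.ff lam) N₂ x) < 1/4 :=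
    hN₀ N₂ (le_max_right _ _) x hxball
  have htri := dist_triangle4 (1:ℂ) (g x) (cesaro (fun w => lam * w) (Stmt3Aux.ff lam) N₂ x) 0
  have hd10 : dist (1:ℂ) (0:ℂ) = 1 := by simp [dist_eq_norm]
  rw [hd10] at htri
  rw [dist_comm] at hg1
  linarith
end
end

section
/- Let φ ∈ A(𝔻) be a symbol mapping 𝔻̄ into 𝔻̄ whose iterates φ^n converge to a point z₀ ∈ 𝔻̄ uniformly on the compact subsets of 𝔻 (z₀ is the Denjoy–Wolff point of φ). If the composition operator C_φ : A(𝔻) → A(𝔻) is mean ergodic, then for every f ∈ A(𝔻) and every z ∈ 𝔻̄ one has lim_{n→∞} (1/n) Σ_{m=1}^n f(φ^m(z)) = f(z₀). -/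
open Metric Set Filter Complex
open scoped Topology Classical

noncomputable section

/-- **Necessary condition for mean ergodicity on `A(𝔻)`.** Let `φ ∈ A(𝔻)` map `𝔻̄` into `𝔻̄`
with Denjoy–Wolff point `z₀ ∈ 𝔻̄` (i.e. `φ^n → z₀` uniformly on compact subsets of `𝔻`).
If `C_φ : A(𝔻) → A(𝔻)` is mean ergodic, then `(1/n) ∑_{m=1}^n f(φ^m(z)) → f(z₀)` for every
`f ∈ A(𝔻)` and every `z ∈ 𝔻̄`. -/
theorem stmt_5 (φ : ℂ → ℂ) (hφa : IsDiscAlg φ)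
    (hφm : MapsTo φ (closedBall (0:ℂ) 1) (closedBall (0:ℂ) 1))
    (hφb : MapsTo φ (ball (0:ℂ) 1) (ball (0:ℂ) 1))
    (z₀ : ℂ) (hz₀ : z₀ ∈ closedBall (0:ℂ) 1)
    (hDW : TendstoLocallyUniformlyOn (fun (n : ℕ) (z : ℂ) => φ^[n] z) (fun _ => z₀)
      atTop (ball (0:ℂ) 1))
    (hme : MeanErgodicDiscAlg φ) :
    ∀ f : ℂ → ℂ, IsDiscAlg f → ∀ z ∈ closedBall (0:ℂ) 1,
      Tendsto (fun n : ℕ => cesaro φ f n z) atTop (𝓝 (f z₀)) := by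
  intro f hf z hz
  obtain ⟨g, hg⟩ := hme f hf
  -- iterates are continuous on the closed ball and map it into itself
  have hiter : ∀ m : ℕ, ContinuousOn (φ^[m]) (closedBall (0:ℂ) 1) ∧
      MapsTo (φ^[m]) (closedBall (0:ℂ) 1) (closedBall (0:ℂ) 1) := by
    intro m
    induction m with
    | zero => simpa using ⟨continuousOn_id, mapsTo_id _⟩
    | succ k ih =>
      rw [Function.iterate_succ']
      exact ⟨hφa.1.comp ih.1 ih.2, hφm.comp ih.2⟩
  -- each Cesàro mean is continuous on the closed ball
  have hcont : ∀ n : ℕ, ContinuousOn (cesaro φ f n) (closedBall (0:ℂ) 1) := by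
    intro n
    unfold cesaro
    exact (continuousOn_const (c := (n:ℂ)⁻¹)).mul
      (continuousOn_finset_sum _ fun m _ => hf.1.comp (hiter m).1 (hiter m).2)
  -- g is continuous on the closed ball
  have hgc : ContinuousOn g (closedBall (0:ℂ) 1) :=
    hg.continuousOn (Eventually.of_forall hcont).frequently
  -- pointwise convergence of Cesàro means to f z₀ on the open ball
  have hptwise : ∀ w ∈ ball (0:ℂ) 1,
      Tendsto (fun n : ℕ => cesaro φ f n w) atTop (𝓝 (f z₀)) := by
    intro w hw
    have horb : Tendsto (fun n : ℕ => φ^[n] w) atTop (𝓝 z₀) := hDW.tendsto_at hw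
    have horb' : Tendsto (fun i : ℕ => φ^[i + 1] w) atTop (𝓝 z₀) :=
      horb.comp (tendsto_add_atTop_nat 1)
    have hmem : ∀ i : ℕ, φ^[i + 1] w ∈ closedBall (0:ℂ) 1 :=
      fun i => (hiter (i + 1)).2 (ball_subset_closedBall hw)
    have hfw : Tendsto (fun i : ℕ => f (φ^[i + 1] w)) atTop (𝓝 (f z₀)) := by
      have := (hf.1 z₀ hz₀).tendsto
      exact this.comp (tendsto_nhdsWithin_of_tendsto_nhds_of_eventually_within _
        horb' (Eventually.of_forall hmem))
    have hces := hfw.cesaro_smul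
    have : (fun n : ℕ => cesaro φ f n w)
        = fun n : ℕ => (n : ℝ)⁻¹ • ∑ i ∈ Finset.range n, f (φ^[i + 1] w) := by
      funext n
      unfold cesaro
      rw [← Finset.Ico_add_one_right_eq_Icc, Finset.sum_Ico_eq_sum_range]
      simp only [Nat.add_sub_cancel, add_comm 1]
      rw [Complex.real_smul]; push_cast; ring
    rw [this]
    exact hces
  -- hence g = f z₀ on the open ball
  have hgeq : ∀ w ∈ ball (0:ℂ) 1, g w = f z₀ := by
    intro w hw
    have h1 : Tendsto (fun n : ℕ => cesaro φ f n w) atTop (𝓝 (g w)) :=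
      hg.tendsto_at (ball_subset_closedBall hw)
    exact tendsto_nhds_unique h1 (hptwise w hw)
  -- by continuity, g = f z₀ on the closed ball
  have hgz : g z = f z₀ := by
    have hzc : z ∈ closure (ball (0:ℂ) 1) := by
      rwa [closure_ball (0:ℂ) one_ne_zero]
    have hnb : (𝓝[ball (0:ℂ) 1] z).NeBot := mem_closure_iff_nhdsWithin_neBot.mp hzc
    have h1 : Tendsto g (𝓝[ball (0:ℂ) 1] z) (𝓝 (g z)) :=
      ((hgc z hz).mono ball_subset_closedBall).tendsto
    have h2 : Tendsto g (𝓝[ball (0:ℂ) 1] z) (𝓝 (f z₀)) := by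
      apply Tendsto.congr' _ tendsto_const_nhds
      filter_upwards [self_mem_nhdsWithin] with w hw
      exact (hgeq w hw).symm
    exact tendsto_nhds_unique h1 h2
  have := hg.tendsto_at hz
  rwa [hgz] at this
end
end

section
/- Let φ ∈ A(𝔻) be a symbol mapping 𝔻̄ into 𝔻̄ and let z₀ ∈ 𝔻̄. If lim_{n→∞} φ^n(z) = z₀ for every z ∈ 𝔻̄, then the composition operator C_φ : A(𝔻) → A(𝔻) is mean ergodic, and for every f ∈ A(𝔻) the Cesàro means (1/n) Σ_{m=1}^n C_φ^m f converge in the sup norm to the constant function f(z₀). -/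
open Metric Set Filter Complex
open scoped Topology Classical

noncomputable section

section Stmt6Aux

variable {K : Set ℂ} {φ : ℂ → ℂ} {h : ℂ → ℝ}

private lemma iter_contOn (hφc : ContinuousOn φ K) (hφm : MapsTo φ K K) :
    ∀ m : ℕ, ContinuousOn (fun z => φ^[m] z) K := by
  intro m
  induction m with
  | zero => exact continuousOn_id
  | succ m ih =>
      have : ContinuousOn (fun z => φ (φ^[m] z)) K := hφc.comp ih (hφm.iterate m)
      simpa [Function.iterate_succ_apply'] using this

private lemma ptwise_window (hφm : MapsTo φ K K)
    (hh0 : ∀ w ∈ K, 0 ≤ h w) {z : ℂ} (hz : z ∈ K)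
    (hptw : Tendsto (fun m : ℕ => h (φ^[m] z)) atTop (𝓝 0))
    {δ : ℝ} (hδ : 0 < δ) :
    ∃ ℓ : ℕ, 1 ≤ ℓ ∧ (∑ j ∈ Finset.Icc 1 ℓ, h (φ^[j] z)) ≤ ℓ * δ := by
  obtain ⟨M, hM⟩ := Filter.eventually_atTop.mp (hptw.eventually_lt_const (half_pos hδ))
  set S : ℝ := ∑ j ∈ Finset.Icc 1 M, h (φ^[j] z) with hS
  have hδ2 : (0:ℝ) < δ / 2 := half_pos hδ
  set ℓ : ℕ := max (M + 1) (⌈S / (δ / 2)⌉₊ + 1) with hℓdef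
  have hMℓ : M ≤ ℓ := le_trans (Nat.le_succ M) (le_max_left _ _)
  have hℓ1 : 1 ≤ ℓ := le_trans (Nat.le_add_left 1 M) (le_max_left _ _)
  refine ⟨ℓ, hℓ1, ?_⟩
  have hsplit : (∑ j ∈ Finset.Icc 1 ℓ, h (φ^[j] z))
      = S + ∑ j ∈ Finset.Ioc M ℓ, h (φ^[j] z) := by
    rw [hS, show Finset.Icc 1 ℓ = Finset.Ioc 0 ℓ from Finset.Icc_add_one_left_eq_Ioc 0 ℓ,
        show Finset.Icc 1 M = Finset.Ioc 0 M from Finset.Icc_add_one_left_eq_Ioc 0 M]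
    exact (Finset.sum_Ioc_consecutive _ (Nat.zero_le M) hMℓ).symm
  have htail : (∑ j ∈ Finset.Ioc M ℓ, h (φ^[j] z)) ≤ (ℓ : ℝ) * (δ / 2) := by
    have h1 := Finset.sum_le_card_nsmul (Finset.Ioc M ℓ) (fun j => h (φ^[j] z)) (δ / 2)
      (fun j hj => le_of_lt (hM j (Finset.mem_Ioc.mp hj).1.le))
    rw [Nat.card_Ioc, nsmul_eq_mul] at h1
    refine h1.trans ?_
    have h2 : ((ℓ - M : ℕ) : ℝ) ≤ (ℓ : ℝ) := by exact_mod_cast Nat.sub_le ℓ M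
    exact mul_le_mul_of_nonneg_right h2 hδ2.le
  have hSbound : S ≤ (ℓ : ℝ) * (δ / 2) := by
    have h1 : S / (δ / 2) ≤ (⌈S / (δ / 2)⌉₊ : ℝ) := Nat.le_ceil _
    have h2 : ((⌈S / (δ / 2)⌉₊ : ℕ) : ℝ) ≤ (ℓ : ℝ) := by
      exact_mod_cast le_trans (Nat.le_succ _) (le_max_right _ _)
    calc S = S / (δ/2) * (δ/2) := by field_simp
    _ ≤ (ℓ:ℝ) * (δ/2) := mul_le_mul_of_nonneg_right (h1.trans h2) hδ2.le
  rw [hsplit]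
  have : (ℓ:ℝ) * δ = (ℓ:ℝ) * (δ/2) + (ℓ:ℝ) * (δ/2) := by ring
  linarith

private lemma uniform_window (hK : IsCompact K) (hφc : ContinuousOn φ K) (hφm : MapsTo φ K K)
    (hh : ContinuousOn h K) (hh0 : ∀ w ∈ K, 0 ≤ h w)
    (hptw : ∀ z ∈ K, Tendsto (fun m : ℕ => h (φ^[m] z)) atTop (𝓝 0))
    {δ : ℝ} (hδ : 0 < δ) :
    ∃ L : ℕ, 1 ≤ L ∧ ∀ z ∈ K, ∃ ℓ : ℕ, 1 ≤ ℓ ∧ ℓ ≤ L ∧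
      (∑ j ∈ Finset.Icc 1 ℓ, h (φ^[j] z)) ≤ ℓ * δ := by
  by_contra hcon
  push_neg at hcon
  choose w hwK hw using fun L : ℕ => hcon (L + 1) (Nat.le_add_left 1 L)
  obtain ⟨a, haK, ψ, hψ, hψt⟩ := hK.tendsto_subseq hwK
  have gcont : ∀ ℓ : ℕ, ContinuousOn (fun z => ∑ j ∈ Finset.Icc 1 ℓ, h (φ^[j] z)) K := by
    intro ℓ
    apply continuousOn_finset_sum
    intro j _
    exact hh.comp (iter_contOn hφc hφm j) (hφm.iterate j)
  have hge : ∀ ℓ : ℕ, 1 ≤ ℓ → (ℓ : ℝ) * δ ≤ ∑ j ∈ Finset.Icc 1 ℓ, h (φ^[j] a) := by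
    intro ℓ hℓ
    have htd : Tendsto (fun k => w (ψ k)) atTop (𝓝[K] a) :=
      tendsto_nhdsWithin_iff.mpr ⟨hψt, Filter.Eventually.of_forall fun k => hwK _⟩
    have h2 : Tendsto (fun k => ∑ j ∈ Finset.Icc 1 ℓ, h (φ^[j] (w (ψ k)))) atTop
        (𝓝 (∑ j ∈ Finset.Icc 1 ℓ, h (φ^[j] a))) :=
      ((gcont ℓ a haK).tendsto).comp htd
    refine ge_of_tendsto h2 ?_
    filter_upwards [Filter.eventually_ge_atTop ℓ] with k hk
    have hℓψ : ℓ ≤ ψ k + 1 := le_trans (hk.trans hψ.le_apply) (Nat.le_succ _)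
    exact (hw (ψ k) ℓ hℓ hℓψ).le
  obtain ⟨ℓ, hℓ1, hℓb⟩ := ptwise_window hφm hh0 haK (hptw a haK) (half_pos hδ)
  have h1 : (1:ℝ) ≤ (ℓ:ℝ) := by exact_mod_cast hℓ1
  have h2 := hge ℓ hℓ1
  nlinarith

private lemma block_sum (hφm : MapsTo φ K K)
    {C δ : ℝ} (hC0 : 0 ≤ C) (hCb : ∀ w ∈ K, h w ≤ C) (hδ0 : 0 ≤ δ)
    {L : ℕ}
    (hwin : ∀ z ∈ K, ∃ ℓ : ℕ, 1 ≤ ℓ ∧ ℓ ≤ L ∧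
      (∑ j ∈ Finset.Icc 1 ℓ, h (φ^[j] z)) ≤ ℓ * δ) :
    ∀ n : ℕ, ∀ z ∈ K, (∑ m ∈ Finset.Icc 1 n, h (φ^[m] z)) ≤ n * δ + L * C := by
  intro n
  induction n using Nat.strong_induction_on with
  | _ n ih =>
    intro z hz
    obtain ⟨ℓ, hℓ1, hℓL, hblock⟩ := hwin z hz
    by_cases hn : n < ℓ
    · have hb : (∑ m ∈ Finset.Icc 1 n, h (φ^[m] z)) ≤ (n:ℝ) * C := by
        have h1 := Finset.sum_le_card_nsmul (Finset.Icc 1 n) (fun m => h (φ^[m] z)) C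
          (fun m _ => hCb _ (hφm.iterate m hz))
        rw [Nat.card_Icc, nsmul_eq_mul] at h1
        simpa using h1
      have hnL : (n:ℝ) ≤ (L:ℝ) := by exact_mod_cast (le_of_lt (lt_of_lt_of_le hn hℓL))
      have hnδ : (0:ℝ) ≤ (n:ℝ) * δ := mul_nonneg (Nat.cast_nonneg n) hδ0
      nlinarith
    · push_neg at hn
      have hsplit : (∑ m ∈ Finset.Icc 1 n, h (φ^[m] z))
          = (∑ m ∈ Finset.Icc 1 ℓ, h (φ^[m] z)) + ∑ m ∈ Finset.Ioc ℓ n, h (φ^[m] z) := by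
        rw [show Finset.Icc 1 n = Finset.Ioc 0 n from Finset.Icc_add_one_left_eq_Ioc 0 n,
            show Finset.Icc 1 ℓ = Finset.Ioc 0 ℓ from Finset.Icc_add_one_left_eq_Ioc 0 ℓ]
        exact (Finset.sum_Ioc_consecutive _ (Nat.zero_le ℓ) hn).symm
      have hre : (∑ m ∈ Finset.Ioc ℓ n, h (φ^[m] z))
          = ∑ m ∈ Finset.Icc 1 (n - ℓ), h (φ^[m] (φ^[ℓ] z)) := by
        rw [show Finset.Icc 1 (n - ℓ) = Finset.Ioc 0 (n - ℓ) from Finset.Icc_add_one_left_eq_Ioc 0 (n - ℓ),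
            show Finset.Ioc ℓ n = Finset.map (addRightEmbedding ℓ) (Finset.Ioc 0 (n - ℓ)) by
              rw [Finset.map_add_right_Ioc, Nat.zero_add, Nat.sub_add_cancel hn],
            Finset.sum_map]
        refine Finset.sum_congr rfl fun m _ => ?_
        simp [addRightEmbedding_apply, Function.iterate_add_apply]
      have hnpos : 0 < n := lt_of_lt_of_le Nat.one_pos (hℓ1.trans hn)
      have hIH := ih (n - ℓ) (Nat.sub_lt hnpos hℓ1) (φ^[ℓ] z) (hφm.iterate ℓ hz)
      have hcast : ((n - ℓ : ℕ) : ℝ) = (n : ℝ) - (ℓ:ℝ) := Nat.cast_sub hn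
      rw [hcast] at hIH
      rw [hsplit, hre]
      linarith

private lemma main_bound (hK : IsCompact K) (hφc : ContinuousOn φ K) (hφm : MapsTo φ K K)
    (hh : ContinuousOn h K) (hh0 : ∀ w ∈ K, 0 ≤ h w)
    (hptw : ∀ z ∈ K, Tendsto (fun m : ℕ => h (φ^[m] z)) atTop (𝓝 0)) :
    ∀ ε : ℝ, 0 < ε → ∃ N : ℕ, 1 ≤ N ∧ ∀ n : ℕ, N ≤ n → ∀ z ∈ K,
      (∑ m ∈ Finset.Icc 1 n, h (φ^[m] z)) ≤ n * ε := by
  intro ε hε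
  obtain ⟨C₀, hC₀⟩ := hK.exists_bound_of_continuousOn hh
  set C := max C₀ 0 with hC
  have hC0 : 0 ≤ C := le_max_right _ _
  have hCb : ∀ w ∈ K, h w ≤ C := by
    intro w hw
    have h1 := hC₀ w hw
    rw [Real.norm_eq_abs] at h1
    exact (le_abs_self _).trans (h1.trans (le_max_left _ _))
  obtain ⟨L, hL1, hwin⟩ := uniform_window hK hφc hφm hh hh0 hptw (half_pos hε)
  have hδ2 : (0:ℝ) < ε / 2 := half_pos hε
  refine ⟨max 1 (⌈((L:ℝ) * C) / (ε / 2)⌉₊ + 1), le_max_left _ _, ?_⟩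
  intro n hn z hz
  have hb := block_sum hφm hC0 hCb hδ2.le hwin n z hz
  have h1 : ((L:ℝ) * C) / (ε/2) ≤ (⌈((L:ℝ) * C)/(ε/2)⌉₊ : ℝ) := Nat.le_ceil _
  have h2 : (⌈((L:ℝ) * C)/(ε/2)⌉₊ + 1 : ℕ) ≤ n := le_trans (le_max_right _ _) hn
  have h3 : ((⌈((L:ℝ) * C)/(ε/2)⌉₊ : ℕ):ℝ) ≤ (n:ℝ) := by
    exact_mod_cast (Nat.le_succ _).trans h2
  have h4 : (L:ℝ) * C ≤ (n:ℝ) * (ε/2) := by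
    calc (L:ℝ) * C = ((L:ℝ) * C)/(ε/2) * (ε/2) := by field_simp
    _ ≤ (n:ℝ) * (ε/2) := mul_le_mul_of_nonneg_right (h1.trans h3) hδ2.le
  have : (n:ℝ) * ε = (n:ℝ) * (ε/2) + (n:ℝ) * (ε/2) := by ring
  linarith

end Stmt6Aux

/-- **Sufficient condition for mean ergodicity on `A(𝔻)`.** Let `φ ∈ A(𝔻)` map `𝔻̄` into `𝔻̄`
and let `z₀ ∈ 𝔻̄`. If `φ^n(z) → z₀` for every `z ∈ 𝔻̄`, then `C_φ : A(𝔻) → A(𝔻)` is mean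
ergodic and for every `f ∈ A(𝔻)` the Cesàro means converge in sup norm to the constant
`f(z₀)`. -/
theorem stmt_6 (φ : ℂ → ℂ) (hφa : IsDiscAlg φ)
    (hφm : MapsTo φ (closedBall (0:ℂ) 1) (closedBall (0:ℂ) 1))
    (hφb : MapsTo φ (ball (0:ℂ) 1) (ball (0:ℂ) 1))
    (z₀ : ℂ) (hz₀ : z₀ ∈ closedBall (0:ℂ) 1)
    (hconv : ∀ z ∈ closedBall (0:ℂ) 1, Tendsto (fun n : ℕ => φ^[n] z) atTop (𝓝 z₀)) :
    MeanErgodicDiscAlg φ ∧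
    ∀ f : ℂ → ℂ, IsDiscAlg f →
      TendstoUniformlyOn (cesaro φ f) (fun _ => f z₀) atTop (closedBall (0:ℂ) 1) := by
  have key : ∀ f : ℂ → ℂ, IsDiscAlg f →
      TendstoUniformlyOn (cesaro φ f) (fun _ => f z₀) atTop (closedBall (0:ℂ) 1) := by
    intro f hf
    have hK : IsCompact (closedBall (0:ℂ) 1) := isCompact_closedBall 0 1
    set h : ℂ → ℝ := fun w => ‖f w - f z₀‖ with hdef
    have hh : ContinuousOn h (closedBall (0:ℂ) 1) := (hf.1.sub continuousOn_const).norm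
    have hh0 : ∀ w ∈ closedBall (0:ℂ) 1, 0 ≤ h w := fun w _ => norm_nonneg _
    have hptw : ∀ z ∈ closedBall (0:ℂ) 1,
        Tendsto (fun m : ℕ => h (φ^[m] z)) atTop (𝓝 0) := by
      intro z hz
      have h1 : Tendsto (fun m : ℕ => φ^[m] z) atTop (𝓝[closedBall (0:ℂ) 1] z₀) :=
        tendsto_nhdsWithin_iff.mpr
          ⟨hconv z hz, Filter.Eventually.of_forall fun m => hφm.iterate m hz⟩
      have h2 : Tendsto (fun m : ℕ => f (φ^[m] z)) atTop (𝓝 (f z₀)) :=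
        ((hf.1 z₀ hz₀).tendsto).comp h1
      have h3 : Tendsto (fun m : ℕ => f (φ^[m] z) - f z₀) atTop (𝓝 0) := by
        simpa using h2.sub (tendsto_const_nhds (x := f z₀))
      simpa [hdef] using h3.norm
    rw [Metric.tendstoUniformlyOn_iff]
    intro ε hε
    obtain ⟨N, hN1, hbound⟩ := main_bound hK hφa.1 hφm hh hh0 hptw (ε/2) (half_pos hε)
    filter_upwards [Filter.eventually_ge_atTop N] with n hn
    intro z hz
    have hn1 : 1 ≤ n := hN1.trans hn
    have hne : (n:ℂ) ≠ 0 := Nat.cast_ne_zero.mpr (by omega)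
    have hkey : cesaro φ f n z - f z₀
        = (n:ℂ)⁻¹ * ∑ m ∈ Finset.Icc 1 n, (f (φ^[m] z) - f z₀) := by
      rw [Finset.sum_sub_distrib, Finset.sum_const, Nat.card_Icc, Nat.add_sub_cancel,
        mul_sub, nsmul_eq_mul, ← mul_assoc, inv_mul_cancel₀ hne, one_mul]
      rfl
    have hnorm : ‖cesaro φ f n z - f z₀‖
        ≤ (n:ℝ)⁻¹ * ∑ m ∈ Finset.Icc 1 n, h (φ^[m] z) := by
      rw [hkey, norm_mul, norm_inv, Complex.norm_natCast]
      exact mul_le_mul_of_nonneg_left (norm_sum_le _ _)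
        (inv_nonneg.mpr (Nat.cast_nonneg n))
    have hnpos : (0:ℝ) < (n:ℝ) := by exact_mod_cast (by omega : 0 < n)
    have hfin : (n:ℝ)⁻¹ * (∑ m ∈ Finset.Icc 1 n, h (φ^[m] z)) ≤ ε/2 := by
      calc (n:ℝ)⁻¹ * (∑ m ∈ Finset.Icc 1 n, h (φ^[m] z))
          ≤ (n:ℝ)⁻¹ * ((n:ℝ) * (ε/2)) :=
            mul_le_mul_of_nonneg_left (hbound n hn z hz) (inv_nonneg.mpr hnpos.le)
      _ = ε/2 := by field_simp
    rw [dist_comm, dist_eq_norm]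
    calc ‖cesaro φ f n z - f z₀‖ ≤ ε/2 := le_trans hnorm hfin
    _ < ε := by linarith
  exact ⟨fun f hf => ⟨fun _ => f z₀, key f hf⟩, key⟩
end
end

section
/- Let φ ∈ A(𝔻) be a symbol mapping 𝔻̄ into 𝔻̄ whose iterates φ^n converge to 0 uniformly on the compact subsets of 𝔻 (0 is the Denjoy–Wolff point of φ). Then the following are equivalent for the composition operator C_φ on A(𝔻): (i) C_φ is mean ergodic; (ii) C_φ is uniformly mean ergodic; (iii) lim_{n→∞} φ^n(z) = 0 for every z ∈ 𝔻̄. -/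
open Metric Set Filter Complex
open scoped Topology Classical

noncomputable section

namespace ME8

open Metric Set Filter Complex Function

/-! ### Basic iteration lemmas -/

lemma iterMapsTo {φ : ℂ → ℂ} (hφm : MapsTo φ (closedBall (0:ℂ) 1) (closedBall (0:ℂ) 1)) (m : ℕ) :
    MapsTo (φ^[m]) (closedBall (0:ℂ) 1) (closedBall (0:ℂ) 1) := hφm.iterate m

lemma iterMapsToBall {φ : ℂ → ℂ} (hφb : MapsTo φ (ball (0:ℂ) 1) (ball (0:ℂ) 1)) (m : ℕ) :
    MapsTo (φ^[m]) (ball (0:ℂ) 1) (ball (0:ℂ) 1) := hφb.iterate m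

lemma iterContOn {φ : ℂ → ℂ} (hφc : ContinuousOn φ (closedBall (0:ℂ) 1))
    (hφm : MapsTo φ (closedBall (0:ℂ) 1) (closedBall (0:ℂ) 1)) (m : ℕ) :
    ContinuousOn (φ^[m]) (closedBall (0:ℂ) 1) := by
  induction m with
  | zero => simpa using continuousOn_id
  | succ k ih =>
      rw [Function.iterate_succ']
      exact hφc.comp ih (iterMapsTo hφm k)

lemma cesaro_shift (φ f : ℂ → ℂ) (n : ℕ) (z : ℂ) :
    cesaro φ f n z = (n:ℂ)⁻¹ * ∑ m ∈ Finset.range n, f (φ^[m+1] z) := by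
  unfold cesaro
  congr 1
  rw [← Finset.Ico_add_one_right_eq_Icc, Finset.sum_Ico_eq_sum_range]
  refine Finset.sum_congr (by norm_num) fun i _ => by rw [Nat.add_comm]

lemma tendsto_cesaro {a : ℕ → ℂ} {L : ℂ} (h : Tendsto a atTop (𝓝 L)) :
    Tendsto (fun n : ℕ => (n : ℂ)⁻¹ * ∑ m ∈ Finset.range n, a m) atTop (𝓝 L) := by
  have h2 := h.cesaro_smul
  refine h2.congr fun n => ?_
  rw [Complex.real_smul]
  norm_num

lemma iter_tendsto_ball {φ : ℂ → ℂ}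
    (hDW : TendstoLocallyUniformlyOn (fun (n : ℕ) (z : ℂ) => φ^[n] z) (fun _ => (0:ℂ))
      atTop (ball (0:ℂ) 1)) {w : ℂ} (hw : w ∈ ball (0:ℂ) 1) :
    Tendsto (fun n : ℕ => φ^[n] w) atTop (𝓝 (0:ℂ)) := by
  simpa using hDW.tendsto_at hw

/-- Extension of a constant value from the open ball to the closed ball by continuity. -/
lemma eq_on_closed_of_eq_on_ball {g : ℂ → ℂ} {c : ℂ}
    (hg : ContinuousOn g (closedBall (0:ℂ) 1))
    (h : ∀ z ∈ ball (0:ℂ) 1, g z = c) {z : ℂ} (hz : z ∈ closedBall (0:ℂ) 1) : g z = c := by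
  set s : ℕ → ℂ := fun k => (1 - ((k:ℝ)+2)⁻¹) • z with hs
  have hcoef : ∀ k : ℕ, 0 < (1 - ((k:ℝ)+2)⁻¹) ∧ (1 - ((k:ℝ)+2)⁻¹) < 1 := by
    intro k
    have h2 : (0:ℝ) < (k:ℝ) + 2 := by positivity
    have h3 : ((k:ℝ)+2)⁻¹ ≤ 2⁻¹ := by
      apply inv_anti₀ <;> [norm_num; linarith [Nat.cast_nonneg (α := ℝ) k]]
    have h4 : (0:ℝ) < ((k:ℝ)+2)⁻¹ := by positivity
    constructor <;> nlinarith
  have hmem : ∀ k : ℕ, s k ∈ ball (0:ℂ) 1 := by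
    intro k
    rw [mem_ball_zero_iff, hs, norm_smul, Real.norm_eq_abs,
      abs_of_pos (hcoef k).1]
    have hz1 : ‖z‖ ≤ 1 := mem_closedBall_zero_iff.mp hz
    nlinarith [(hcoef k).1, (hcoef k).2, norm_nonneg z]
  have hlim : Tendsto s atTop (𝓝 z) := by
    have h1 : Tendsto (fun k : ℕ => 1 - ((k:ℝ)+2)⁻¹) atTop (𝓝 1) := by
      have h0 : Tendsto (fun k : ℕ => ((k:ℝ)+2)⁻¹) atTop (𝓝 0) := by
        apply Tendsto.inv_tendsto_atTop
        exact tendsto_atTop_add_const_right atTop 2 tendsto_natCast_atTop_atTop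
      simpa using tendsto_const_nhds.sub h0
    have := h1.smul_const z
    simpa [hs, Complex.real_smul] using this
  have hlim' : Tendsto s atTop (𝓝[closedBall (0:ℂ) 1] z) :=
    tendsto_nhdsWithin_of_tendsto_nhds_of_eventually_within _ hlim
      (Eventually.of_forall fun k => ball_subset_closedBall (hmem k))
  have h1 : Tendsto (fun k => g (s k)) atTop (𝓝 (g z)) := (hg z hz).tendsto.comp hlim'
  have h2 : Tendsto (fun k => g (s k)) atTop (𝓝 c) :=
    tendsto_const_nhds.congr fun k => (h _ (hmem k)).symm
  exact tendsto_nhds_unique h1 h2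

/-- The key consequence of mean ergodicity: Cesàro means converge pointwise to `f 0`
everywhere on the closed ball. -/
lemma key {φ : ℂ → ℂ} (hφa : IsDiscAlg φ)
    (hφm : MapsTo φ (closedBall (0:ℂ) 1) (closedBall (0:ℂ) 1))
    (hDW : TendstoLocallyUniformlyOn (fun (n : ℕ) (z : ℂ) => φ^[n] z) (fun _ => (0:ℂ))
      atTop (ball (0:ℂ) 1))
    (hME : MeanErgodicDiscAlg φ) {f : ℂ → ℂ} (hf : IsDiscAlg f)
    {z : ℂ} (hz : z ∈ closedBall (0:ℂ) 1) :
    Tendsto (fun n => cesaro φ f n z) atTop (𝓝 (f 0)) := by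
  obtain ⟨g, hg⟩ := hME f hf
  have hcont : ∀ n : ℕ, ContinuousOn (fun w => cesaro φ f n w) (closedBall (0:ℂ) 1) := by
    intro n
    simp only [cesaro]
    exact continuousOn_const.mul (continuousOn_finset_sum _ fun m _ =>
      hf.1.comp (iterContOn hφa.1 hφm m) (iterMapsTo hφm m))
  have hgc : ContinuousOn g (closedBall (0:ℂ) 1) :=
    hg.continuousOn (Eventually.of_forall hcont).frequently
  have hball : ∀ w ∈ ball (0:ℂ) 1, Tendsto (fun n => cesaro φ f n w) atTop (𝓝 (f 0)) := by
    intro w hw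
    have hf0 : ContinuousAt f 0 := hf.1.continuousAt (closedBall_mem_nhds 0 one_pos)
    have ha : Tendsto (fun m : ℕ => f (φ^[m+1] w)) atTop (𝓝 (f 0)) := by
      have h1 : Tendsto (fun m : ℕ => φ^[m+1] w) atTop (𝓝 (0:ℂ)) :=
        (iter_tendsto_ball hDW hw).comp (tendsto_add_atTop_nat 1)
      exact (hf0.tendsto.comp h1)
    have := tendsto_cesaro ha
    refine this.congr fun n => (cesaro_shift φ f n w).symm
  have hgconst : ∀ w ∈ closedBall (0:ℂ) 1, g w = f 0 := by
    intro w hw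
    refine eq_on_closed_of_eq_on_ball hgc (fun v hv => ?_) hw
    exact tendsto_nhds_unique (hg.tendsto_at (ball_subset_closedBall hv)) (hball v hv)
  have := hg.tendsto_at hz
  rwa [hgconst z hz] at this

end ME8

namespace ME8

open Metric Set Filter Complex Function

lemma norm_one_conj_eq_inv {w : ℂ} (hw : ‖w‖ = 1) : (starRingEnd ℂ) w = w⁻¹ := by
  have h1 : w * (starRingEnd ℂ) w = ((Complex.normSq w : ℝ) : ℂ) := Complex.mul_conj w
  have h2 : Complex.normSq w = 1 := by
    rw [← Complex.sq_norm, hw]; norm_num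
  rw [h2] at h1
  push_cast at h1
  exact eq_inv_of_mul_eq_one_right h1

lemma normSq_eq_norm_sq' (w : ℂ) : Complex.normSq w = ‖w‖^2 := by
  rw [← Complex.sq_norm]


lemma avg_swap (S : Finset ℕ) (K e : ℂ) (f : ℕ → ℕ → ℂ) (w : ℕ → ℕ → ℕ → ℂ) (t : Finset ℕ) :
    e * ∑ m ∈ t, (K * ∑ p ∈ S, ∑ q ∈ S, f p q * w m p q)
      = ∑ p ∈ S, ∑ q ∈ S, (K * f p q) * (e * ∑ m ∈ t, w m p q) := by
  classical
  induction t using Finset.induction_on with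
  | empty => simp
  | @insert a t ha ih =>
      have h1 : e * (K * ∑ p ∈ S, ∑ q ∈ S, f p q * w a p q)
          = ∑ p ∈ S, ∑ q ∈ S, (K * f p q) * (e * w a p q) := by
        simp only [Finset.mul_sum]
        exact Finset.sum_congr rfl fun p _ => Finset.sum_congr rfl fun q _ => by ring
      have h2 : ∀ p q : ℕ, (K * f p q) * (e * ∑ m ∈ insert a t, w m p q)
          = (K * f p q) * (e * w a p q) + (K * f p q) * (e * ∑ m ∈ t, w m p q) := by
        intro p q; rw [Finset.sum_insert ha]; ring
      calc e * ∑ m ∈ insert a t, (K * ∑ p ∈ S, ∑ q ∈ S, f p q * w m p q)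
          = e * (K * ∑ p ∈ S, ∑ q ∈ S, f p q * w a p q)
            + e * ∑ m ∈ t, (K * ∑ p ∈ S, ∑ q ∈ S, f p q * w m p q) := by
            rw [Finset.sum_insert ha]; ring
        _ = (∑ p ∈ S, ∑ q ∈ S, (K * f p q) * (e * w a p q))
            + ∑ p ∈ S, ∑ q ∈ S, (K * f p q) * (e * ∑ m ∈ t, w m p q) := by rw [h1, ih]
        _ = ∑ p ∈ S, ∑ q ∈ S, ((K * f p q) * (e * w a p q)
            + (K * f p q) * (e * ∑ m ∈ t, w m p q)) := by
            rw [← Finset.sum_add_distrib]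
            exact Finset.sum_congr rfl fun p _ => (Finset.sum_add_distrib).symm
        _ = ∑ p ∈ S, ∑ q ∈ S, (K * f p q) * (e * ∑ m ∈ insert a t, w m p q) :=
            Finset.sum_congr rfl fun p _ => Finset.sum_congr rfl fun q _ => (h2 p q).symm

/-- If the Cesàro averages of all integer powers along a unimodular sequence converge to the
"holomorphic" limits, then the sequence visits every neighbourhood on the unit circle. -/
lemma dense_step {u : ℕ → ℂ} (hu : ∀ m, ‖u m‖ = 1)
    (hmono : ∀ j : ℤ, Tendsto (fun n : ℕ => (n:ℂ)⁻¹ * ∑ m ∈ Finset.range n, (u m)^j) atTop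
      (𝓝 (if j = 0 then 1 else 0)))
    {ζ : ℂ} (hζ : ‖ζ‖ = 1) {δ₀ : ℝ} (hδ₀ : 0 < δ₀) :
    ∃ m, ‖u m - ζ‖ < δ₀ := by
  by_contra hfar0
  push_neg at hfar0
  set δ : ℝ := min δ₀ 1 with hδdef
  have hδ : 0 < δ := lt_min hδ₀ one_pos
  have hδ1 : δ ≤ 1 := min_le_right _ _
  have hfar : ∀ m, δ ≤ ‖u m - ζ‖ := fun m => le_trans (min_le_left _ _) (hfar0 m)
  set ρ : ℝ := 1 - δ^2/4 with hρdef
  have hρ0 : 0 ≤ ρ := by rw [hρdef]; nlinarith [hδ.le, hδ1]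
  have hρ1 : ρ < 1 := by rw [hρdef]; nlinarith [hδ, hδ1]
  have hu0 : ∀ m, u m ≠ 0 := by
    intro m h
    have := hu m; rw [h] at this; simp at this
  set a : ℂ := (starRingEnd ℂ) ζ with ha
  have haζ : a * ζ = 1 := by
    have := Complex.mul_conj ζ
    have h2 : Complex.normSq ζ = 1 := by rw [normSq_eq_norm_sq', hζ]; norm_num
    rw [h2] at this
    push_cast at this
    rw [ha, mul_comm]; exact this
  set B : ℕ → ℂ := fun m => (1 + a * u m) * (1 + ζ * (u m)⁻¹) * (4:ℂ)⁻¹ with hB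
  set r : ℕ → ℝ := fun m => Complex.normSq (1 + a * u m) * 4⁻¹ with hrdef
  have hBval : ∀ m, B m = ((r m : ℝ) : ℂ) := by
    intro m
    have hc : (1 + ζ * (u m)⁻¹) = (starRingEnd ℂ) (1 + a * u m) := by
      rw [map_add, map_one, map_mul, ha, Complex.conj_conj, norm_one_conj_eq_inv (hu m)]
    simp only [hB]
    rw [hc]
    simp only [hrdef]
    rw [Complex.mul_conj]
    push_cast
    ring
  have hr_nonneg : ∀ m, 0 ≤ r m := by
    intro m; simp only [hrdef]; exact mul_nonneg (Complex.normSq_nonneg _) (by norm_num)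
  have hr_le : ∀ m, r m ≤ ρ := by
    intro m
    have h1 : (1 : ℂ) + a * u m = a * (ζ + u m) := by rw [mul_add, haζ]
    have h2 : Complex.normSq (1 + a * u m) = Complex.normSq (ζ + u m) := by
      rw [h1, Complex.normSq_mul, ha, Complex.normSq_conj]
      have : Complex.normSq ζ = 1 := by rw [normSq_eq_norm_sq', hζ]; norm_num
      rw [this, one_mul]
    have hpar : Complex.normSq (ζ + u m) + Complex.normSq (u m - ζ)
        = 2 * Complex.normSq ζ + 2 * Complex.normSq (u m) := by
      simp only [Complex.normSq_apply, Complex.add_re, Complex.add_im, Complex.sub_re,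
        Complex.sub_im]
      ring
    have hζ2 : Complex.normSq ζ = 1 := by rw [normSq_eq_norm_sq', hζ]; norm_num
    have hu2 : Complex.normSq (u m) = 1 := by rw [normSq_eq_norm_sq', hu m]; norm_num
    have hd2 : δ^2 ≤ Complex.normSq (u m - ζ) := by
      rw [normSq_eq_norm_sq']
      have := hfar m
      nlinarith [norm_nonneg (u m - ζ)]
    simp only [hrdef]
    rw [h2]
    nlinarith
  -- the two-variable binomial expansion of `(B m)^N`
  set c : ℕ → ℕ → ℕ → ℂ := fun N p q => ((N.choose p : ℂ)) * ((N.choose q : ℂ)) * a^p * ζ^q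
    with hc
  have hzpq : ∀ m (p q : ℕ), (u m)^p * ((u m)⁻¹)^q = (u m)^((p:ℤ) - (q:ℤ)) := by
    intro m p q
    rw [inv_pow, ← zpow_natCast (u m) p, ← zpow_natCast (u m) q, ← zpow_neg,
      ← zpow_add₀ (hu0 m), sub_eq_add_neg]
  have hexp : ∀ (N : ℕ) m, (B m)^N = (4:ℂ)⁻¹^N *
      ∑ p ∈ Finset.range (N+1), ∑ q ∈ Finset.range (N+1),
        c N p q * (u m)^((p:ℤ) - (q:ℤ)) := by
    intro N m
    have h1 : (1 + a * u m)^N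
        = ∑ p ∈ Finset.range (N+1), (N.choose p : ℂ) * a^p * (u m)^p := by
      rw [add_comm, add_pow]
      refine Finset.sum_congr rfl fun p hp => ?_
      rw [mul_pow, one_pow, mul_one]
      ring
    have h2 : (1 + ζ * (u m)⁻¹)^N
        = ∑ q ∈ Finset.range (N+1), (N.choose q : ℂ) * ζ^q * ((u m)⁻¹)^q := by
      rw [add_comm, add_pow]
      refine Finset.sum_congr rfl fun q hq => ?_
      rw [mul_pow, one_pow, mul_one]
      ring
    simp only [hB]
    rw [mul_pow, mul_pow, h1, h2, Finset.sum_mul_sum, Finset.sum_mul, Finset.mul_sum]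
    refine Finset.sum_congr rfl fun p hp => ?_
    rw [Finset.sum_mul, Finset.mul_sum]
    refine Finset.sum_congr rfl fun q hq => ?_
    rw [← hzpq m p q]
    simp only [hc]
    ring
  -- limit of the Cesàro averages of `(B m)^N`
  have hlim : ∀ N : ℕ, Tendsto (fun n : ℕ => (n:ℂ)⁻¹ * ∑ m ∈ Finset.range n, (B m)^N)
      atTop (𝓝 ((4:ℂ)⁻¹^N * ∑ p ∈ Finset.range (N+1), c N p p)) := by
    intro N
    have hswap : ∀ n : ℕ, (n:ℂ)⁻¹ * ∑ m ∈ Finset.range n, (B m)^N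
        = ∑ p ∈ Finset.range (N+1), ∑ q ∈ Finset.range (N+1),
            ((4:ℂ)⁻¹^N * c N p q) * ((n:ℂ)⁻¹ * ∑ m ∈ Finset.range n, (u m)^((p:ℤ) - (q:ℤ))) := by
      intro n
      have hs := avg_swap (Finset.range (N+1)) ((4:ℂ)⁻¹^N) ((n:ℂ)⁻¹)
        (fun p q => c N p q) (fun m p q => (u m)^((p:ℤ)-(q:ℤ))) (Finset.range n)
      simp only [hexp N]
      exact hs
    have h2 : Tendsto (fun n : ℕ => ∑ p ∈ Finset.range (N+1), ∑ q ∈ Finset.range (N+1),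
        ((4:ℂ)⁻¹^N * c N p q) * ((n:ℂ)⁻¹ * ∑ m ∈ Finset.range n, (u m)^((p:ℤ) - (q:ℤ))))
        atTop (𝓝 (∑ p ∈ Finset.range (N+1), ∑ q ∈ Finset.range (N+1),
        ((4:ℂ)⁻¹^N * c N p q) * (if ((p:ℤ) - (q:ℤ)) = 0 then 1 else 0))) := by
      refine tendsto_finset_sum _ fun p hp => tendsto_finset_sum _ fun q hq => ?_
      exact (hmono ((p:ℤ) - q)).const_mul _
    have hval : (∑ p ∈ Finset.range (N+1), ∑ q ∈ Finset.range (N+1),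
        ((4:ℂ)⁻¹^N * c N p q) * (if ((p:ℤ) - (q:ℤ)) = 0 then 1 else 0))
        = (4:ℂ)⁻¹^N * ∑ p ∈ Finset.range (N+1), c N p p := by
      rw [Finset.mul_sum]
      refine Finset.sum_congr rfl fun p hp => ?_
      rw [Finset.sum_eq_single p]
      · simp
      · intro q hq hqp
        have : ¬ ((p:ℤ) - (q:ℤ) = 0) := by
          simp only [sub_eq_zero]
          exact_mod_cast fun h => hqp (by exact_mod_cast h.symm)
        simp [this]
      · intro hp'; exact absurd hp hp'
    rw [hval] at h2
    exact Tendsto.congr (fun n => (hswap n).symm) h2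
  -- the limit is a real number that is at least `1/(N+1)`
  have hcpp : ∀ N p, c N p p = ((N.choose p : ℂ))^2 := by
    intro N p
    simp only [hc]
    have : a^p * ζ^p = 1 := by rw [← mul_pow, haζ, one_pow]
    rw [mul_assoc, this]
    ring
  have hreal : ∀ N : ℕ, ((4:ℂ)⁻¹^N * ∑ p ∈ Finset.range (N+1), c N p p)
      = (((4:ℝ)⁻¹^N * ∑ p ∈ Finset.range (N+1), ((N.choose p : ℝ))^2 : ℝ) : ℂ) := by
    intro N
    rw [Finset.sum_congr rfl fun p _ => hcpp N p]
    push_cast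
    ring
  have hlow : ∀ N : ℕ, (1:ℝ)/(N+1) ≤ (4:ℝ)⁻¹^N * ∑ p ∈ Finset.range (N+1), ((N.choose p : ℝ))^2 := by
    intro N
    have hcs := sq_sum_le_card_mul_sum_sq (s := Finset.range (N+1)) (f := fun p => ((N.choose p : ℝ)))
    rw [Finset.card_range] at hcs
    have hsum : ∑ p ∈ Finset.range (N+1), ((N.choose p : ℝ)) = 2^N := by
      rw [← Nat.cast_sum]
      rw [Nat.sum_range_choose]
      push_cast; ring
    rw [hsum] at hcs
    have h4 : ((2:ℝ)^N)^2 = 4^N := by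
      rw [← pow_mul, mul_comm, pow_mul]; norm_num
    rw [h4] at hcs
    have hN1 : (0:ℝ) < (N:ℝ) + 1 := by positivity
    have h5 : (0:ℝ) < (4:ℝ)^N := by positivity
    have hcs' : (4:ℝ)^N ≤ ((N:ℝ)+1) * ∑ p ∈ Finset.range (N+1), ((N.choose p : ℝ))^2 := by
      push_cast at hcs
      linarith
    rw [div_le_iff₀ hN1, inv_pow]
    rw [show ((4:ℝ)^N)⁻¹ * (∑ p ∈ Finset.range (N+1), ((N.choose p : ℝ))^2) * ((N:ℝ)+1)
        = (((N:ℝ)+1) * ∑ p ∈ Finset.range (N+1), ((N.choose p : ℝ))^2)/4^N by ring]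
    rw [le_div_iff₀ h5, one_mul]
    exact hcs'
  -- the sup bound `ρ^N`
  have hbound : ∀ N : ℕ, ∀ n : ℕ, 1 ≤ n →
      ‖(n:ℂ)⁻¹ * ∑ m ∈ Finset.range n, (B m)^N‖ ≤ ρ^N := by
    intro N n hn
    have h1 : ‖∑ m ∈ Finset.range n, (B m)^N‖ ≤ ∑ m ∈ Finset.range n, ρ^N := by
      refine le_trans (norm_sum_le _ _) (Finset.sum_le_sum fun m _ => ?_)
      rw [hBval m, ← Complex.ofReal_pow, Complex.norm_real, Real.norm_eq_abs,
        _root_.abs_of_nonneg (pow_nonneg (hr_nonneg m) N)]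
      exact pow_le_pow_left₀ (hr_nonneg m) (hr_le m) N
    rw [norm_mul, norm_inv, Complex.norm_natCast]
    rw [Finset.sum_const, Finset.card_range, nsmul_eq_mul] at h1
    have hn0 : (0:ℝ) < n := by exact_mod_cast hn
    calc ((n:ℝ))⁻¹ * ‖∑ m ∈ Finset.range n, (B m)^N‖
        ≤ ((n:ℝ))⁻¹ * ((n:ℝ) * ρ^N) := by
          apply mul_le_mul_of_nonneg_left h1 (by positivity)
      _ = ρ^N := by field_simp
  -- combining: `1/(N+1) ≤ ρ^N` for every `N`
  have hfinal : ∀ N : ℕ, (1:ℝ)/(N+1) ≤ ρ^N := by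
    intro N
    have h1 : ‖(4:ℂ)⁻¹^N * ∑ p ∈ Finset.range (N+1), c N p p‖ ≤ ρ^N := by
      apply le_of_tendsto (hlim N).norm
      filter_upwards [eventually_ge_atTop 1] with n hn
      exact hbound N n hn
    rw [hreal N, Complex.norm_real, Real.norm_eq_abs, _root_.abs_of_nonneg (by positivity)] at h1
    exact le_trans (hlow N) h1
  -- contradiction: `(N+1) * ρ^N → 0`
  have htend : Tendsto (fun N : ℕ => ((N:ℝ)+1) * ρ^N) atTop (𝓝 0) := by
    have h1 : Summable (fun N : ℕ => (N:ℝ)^1 * ρ^N) :=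
      summable_pow_mul_geometric_of_norm_lt_one 1
        (by rw [Real.norm_eq_abs, _root_.abs_of_nonneg hρ0]; exact hρ1)
    have h2 := h1.tendsto_atTop_zero
    have h3 : Tendsto (fun N : ℕ => ρ^N) atTop (𝓝 0) :=
      tendsto_pow_atTop_nhds_zero_of_lt_one hρ0 hρ1
    have h4 := h2.add h3
    rw [add_zero] at h4
    refine h4.congr fun N => ?_
    ring
  have h5 : ∀ N : ℕ, (1:ℝ) ≤ ((N:ℝ)+1) * ρ^N := by
    intro N
    have := hfinal N
    rw [div_le_iff₀ (by positivity : (0:ℝ) < (N:ℝ)+1)] at this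
    linarith [this]
  have h6 : (1:ℝ) ≤ 0 := ge_of_tendsto htend (Eventually.of_forall h5)
  linarith
end ME8

namespace ME8

open Metric Set Filter Complex Function

/-- A Schwarz-type bound, uniform over the unit ball of the disc algebra. -/
lemma schwarz_bound {f : ℂ → ℂ} (hd : DifferentiableOn ℂ f (ball (0:ℂ) 1))
    (hb : ∀ z ∈ closedBall (0:ℂ) 1, ‖f z‖ ≤ 1) {w : ℂ} (hw : w ∈ closedBall (0:ℂ) 1) :
    ‖f w - f 0‖ ≤ 2 * ‖w‖ := by
  rcases lt_or_eq_of_le (mem_closedBall_zero_iff.mp hw) with h | h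
  · have hball : w ∈ ball (0:ℂ) 1 := mem_ball_zero_iff.mpr h
    have hstep : ∀ ε : ℝ, 0 < ε → ‖f w - f 0‖ ≤ (2+ε) * ‖w‖ := by
      intro ε hε
      have hmaps : MapsTo f (ball (0:ℂ) 1) (ball (f 0) (2+ε)) := by
        intro z hz
        rw [mem_ball, dist_eq_norm]
        have h1 : ‖f z‖ ≤ 1 := hb z (ball_subset_closedBall hz)
        have h2 : ‖f 0‖ ≤ 1 := hb 0 (by simp)
        calc ‖f z - f 0‖ ≤ ‖f z‖ + ‖f 0‖ := norm_sub_le _ _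
          _ ≤ 2 := by linarith
          _ < 2 + ε := by linarith
      have h3 := Complex.dist_le_div_mul_dist_of_mapsTo_ball hd (hmaps.mono_right ball_subset_closedBall) hball
      rw [dist_eq_norm, dist_eq_norm, sub_zero, div_one] at h3
      exact h3
    rcases eq_or_ne w 0 with rfl | hw0
    · simp
    · have hnorm : 0 < ‖w‖ := norm_pos_iff.mpr hw0
      by_contra hlt
      push_neg at hlt
      set d := ‖f w - f 0‖ - 2 * ‖w‖ with hd2
      have hd0 : 0 < d := by simp only [hd2]; linarith
      have hε : 0 < d / (2 * ‖w‖) := by positivity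
      have h5 := hstep _ hε
      have h6 : (d / (2 * ‖w‖)) * ‖w‖ = d/2 := by
        rw [div_mul_eq_mul_div, mul_comm d ‖w‖, mul_comm 2 ‖w‖,
          mul_div_mul_left d 2 hnorm.ne']
      rw [add_mul, h6] at h5
      simp only [hd2] at h5
      linarith
  · have h1 : ‖f w‖ ≤ 1 := hb w hw
    have h2 : ‖f 0‖ ≤ 1 := hb 0 (by simp)
    calc ‖f w - f 0‖ ≤ ‖f w‖ + ‖f 0‖ := norm_sub_le _ _
      _ ≤ 2 * ‖w‖ := by rw [h]; linarith

/-- If all orbits converge to `0`, the iterates converge to `0` uniformly on `𝔻̄`. -/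
lemma sup_decay {φ : ℂ → ℂ} (hφa : IsDiscAlg φ)
    (hφm : MapsTo φ (closedBall (0:ℂ) 1) (closedBall (0:ℂ) 1))
    (hφb : MapsTo φ (ball (0:ℂ) 1) (ball (0:ℂ) 1))
    (hDW : TendstoLocallyUniformlyOn (fun (n : ℕ) (z : ℂ) => φ^[n] z) (fun _ => (0:ℂ))
      atTop (ball (0:ℂ) 1))
    (hiii : ∀ z ∈ closedBall (0:ℂ) 1, Tendsto (fun n : ℕ => φ^[n] z) atTop (𝓝 (0:ℂ))) :
    ∀ ε : ℝ, 0 < ε → ∃ M : ℕ, ∀ m ≥ M, ∀ z ∈ closedBall (0:ℂ) 1, ‖φ^[m] z‖ ≤ ε := by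
  have hN : ∃ N : ℕ, ∀ z ∈ closedBall (0:ℂ) 1, φ^[N] z ∈ ball (0:ℂ) 1 := by
    have hrel : ∀ k : ℕ, ∃ O : Set ℂ, IsOpen O ∧
        (φ^[k]) ⁻¹' (ball (0:ℂ) 1) ∩ closedBall (0:ℂ) 1 = O ∩ closedBall (0:ℂ) 1 :=
      fun k => (_root_.continuousOn_iff'.mp (iterContOn hφa.1 hφm k)) (ball (0:ℂ) 1) isOpen_ball
    choose O hOopen hOeq using hrel
    have hcover : closedBall (0:ℂ) 1 ⊆ ⋃ k : ℕ, O k := by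
      intro z hz
      obtain ⟨k, hk⟩ := (show ∀ᶠ n in atTop, φ^[n] z ∈ ball (0:ℂ) 1 from
        hiii z hz (ball_mem_nhds 0 one_pos)).exists
      have h3 : z ∈ (φ^[k]) ⁻¹' (ball (0:ℂ) 1) ∩ closedBall (0:ℂ) 1 := ⟨hk, hz⟩
      rw [hOeq k] at h3
      exact Set.mem_iUnion.mpr ⟨k, h3.1⟩
    obtain ⟨t, ht⟩ := (isCompact_closedBall (0:ℂ) 1).elim_finite_subcover O hOopen hcover
    refine ⟨t.sup id, fun z hz => ?_⟩
    obtain ⟨k, hkt, hk⟩ := Set.mem_iUnion₂.mp (ht hz)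
    have h4 : z ∈ (φ^[k]) ⁻¹' (ball (0:ℂ) 1) ∩ closedBall (0:ℂ) 1 := by
      rw [hOeq k]; exact ⟨hk, hz⟩
    have h5 : φ^[k] z ∈ ball (0:ℂ) 1 := h4.1
    have h6 : k ≤ t.sup id := Finset.le_sup (f := id) hkt
    have h7 : φ^[t.sup id] z = φ^[t.sup id - k] (φ^[k] z) := by
      rw [← Function.iterate_add_apply, Nat.sub_add_cancel h6]
    rw [h7]
    exact iterMapsToBall hφb _ h5
  obtain ⟨N, hN⟩ := hN
  intro ε hε
  set K : Set ℂ := (φ^[N]) '' closedBall (0:ℂ) 1 with hKdef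
  have hKcomp : IsCompact K :=
    (isCompact_closedBall (0:ℂ) 1).image_of_continuousOn (iterContOn hφa.1 hφm N)
  have hKsub : K ⊆ ball (0:ℂ) 1 := by
    rintro _ ⟨z, hz, rfl⟩; exact hN z hz
  have huc : TendstoUniformlyOn (fun (n:ℕ) (z:ℂ) => φ^[n] z) (fun _ => (0:ℂ)) atTop K :=
    ((tendstoLocallyUniformlyOn_iff_forall_isCompact isOpen_ball).mp hDW) K hKsub hKcomp
  obtain ⟨M₀, hM₀⟩ := eventually_atTop.mp ((Metric.tendstoUniformlyOn_iff.mp huc) ε hε)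
  refine ⟨M₀ + N, fun m hm z hz => ?_⟩
  have h2 : φ^[m] z = φ^[m - N] (φ^[N] z) := by
    rw [← Function.iterate_add_apply, Nat.sub_add_cancel (by omega)]
  rw [h2]
  have h3 := hM₀ (m - N) (by omega) (φ^[N] z) ⟨z, hz, rfl⟩
  rw [dist_comm, dist_zero_right] at h3
  exact h3.le

lemma iii_to_unif {φ : ℂ → ℂ} (hφa : IsDiscAlg φ)
    (hφm : MapsTo φ (closedBall (0:ℂ) 1) (closedBall (0:ℂ) 1))
    (hφb : MapsTo φ (ball (0:ℂ) 1) (ball (0:ℂ) 1))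
    (hDW : TendstoLocallyUniformlyOn (fun (n : ℕ) (z : ℂ) => φ^[n] z) (fun _ => (0:ℂ))
      atTop (ball (0:ℂ) 1))
    (hiii : ∀ z ∈ closedBall (0:ℂ) 1, Tendsto (fun n : ℕ => φ^[n] z) atTop (𝓝 (0:ℂ))) :
    UnifMeanErgodicDiscAlg φ := by
  refine ⟨fun f _ => f 0, ?_⟩
  intro ε hε
  obtain ⟨M, hM⟩ := sup_decay hφa hφm hφb hDW hiii (ε/4) (by linarith)
  refine ⟨max 1 (Nat.ceil ((4*(M:ℝ))/ε)), ?_⟩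
  intro n hn f hf hf1 z hz
  show ‖cesaro φ f n z - f 0‖ ≤ ε
  have hn1 : 1 ≤ n := le_trans (le_max_left _ _) hn
  have hnR : (0:ℝ) < n := by exact_mod_cast hn1
  have hnM : (4*(M:ℝ))/ε ≤ n := by
    calc (4*(M:ℝ))/ε ≤ (Nat.ceil ((4*(M:ℝ))/ε) : ℝ) := Nat.le_ceil _
      _ ≤ n := by exact_mod_cast le_trans (le_max_right _ _) hn
  have h4M : 4*(M:ℝ) ≤ ε * n := by
    rw [div_le_iff₀ hε] at hnM
    linarith
  have hsum : ∀ m ∈ Finset.Icc 1 n, ‖f (φ^[m] z) - f 0‖ ≤ (if m < M then (2:ℝ) else ε/2) := by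
    intro m hm
    have hmem := iterMapsTo hφm m hz
    by_cases hcase : m < M
    · rw [if_pos hcase]
      have h1 := hf1 _ hmem
      have h2 := hf1 0 (by simp)
      calc ‖f (φ^[m] z) - f 0‖ ≤ ‖f (φ^[m] z)‖ + ‖f 0‖ := norm_sub_le _ _
        _ ≤ 2 := by linarith
    · rw [if_neg hcase]
      have h3 := schwarz_bound hf.2 hf1 hmem
      have h4 := hM m (by omega) z hz
      calc ‖f (φ^[m] z) - f 0‖ ≤ 2 * ‖φ^[m] z‖ := h3
        _ ≤ 2 * (ε/4) := by linarith [norm_nonneg (φ^[m] z)]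
        _ = ε/2 := by ring
  have hcount : ∑ m ∈ Finset.Icc 1 n, (if m < M then (2:ℝ) else ε/2)
      ≤ 2*M + (ε/2)*n := by
    have h1 : ∀ m ∈ Finset.Icc 1 n,
        (if m < M then (2:ℝ) else ε/2) ≤ (if m < M then (2:ℝ) else 0) + ε/2 := by
      intro m _
      by_cases h : m < M <;> simp [h] <;> try linarith
    calc ∑ m ∈ Finset.Icc 1 n, (if m < M then (2:ℝ) else ε/2)
        ≤ ∑ m ∈ Finset.Icc 1 n, ((if m < M then (2:ℝ) else 0) + ε/2) := Finset.sum_le_sum h1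
      _ = (∑ m ∈ Finset.Icc 1 n, (if m < M then (2:ℝ) else 0)) + (ε/2)*n := by
          rw [Finset.sum_add_distrib, Finset.sum_const, Nat.card_Icc]
          simp only [nsmul_eq_mul]
          rw [Nat.add_sub_cancel]
          ring
      _ ≤ 2*M + (ε/2)*n := by
          have h2 : ∑ m ∈ Finset.Icc 1 n, (if m < M then (2:ℝ) else 0)
              = ∑ m ∈ (Finset.Icc 1 n).filter (· < M), (2:ℝ) := (Finset.sum_filter _ _).symm
          have h3 : ((Finset.Icc 1 n).filter (· < M)).card ≤ M := by
            have h4 : (Finset.Icc 1 n).filter (· < M) ⊆ Finset.Ico 1 (M+1) := by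
              intro m hm
              rw [Finset.mem_filter, Finset.mem_Icc] at hm
              rw [Finset.mem_Ico]
              omega
            calc ((Finset.Icc 1 n).filter (· < M)).card ≤ (Finset.Ico 1 (M+1)).card :=
                  Finset.card_le_card h4
              _ ≤ M := by rw [Nat.card_Ico]; omega
          rw [h2, Finset.sum_const, nsmul_eq_mul]
          have h5 : (((Finset.Icc 1 n).filter (· < M)).card : ℝ) ≤ M := by exact_mod_cast h3
          nlinarith
  have hid2 : cesaro φ f n z - f 0
      = (n:ℂ)⁻¹ * ∑ m ∈ Finset.Icc 1 n, (f (φ^[m] z) - f 0) := by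
    unfold cesaro
    rw [Finset.sum_sub_distrib, mul_sub]
    congr 1
    rw [Finset.sum_const, Nat.card_Icc, Nat.add_sub_cancel, nsmul_eq_mul, ← mul_assoc,
      inv_mul_cancel₀ (Nat.cast_ne_zero.mpr (by omega : n ≠ 0)), one_mul]
  rw [hid2, norm_mul, norm_inv, Complex.norm_natCast]
  have h5 : ‖∑ m ∈ Finset.Icc 1 n, (f (φ^[m] z) - f 0)‖ ≤ 2*M + (ε/2)*n :=
    le_trans (norm_sum_le _ _) (le_trans (Finset.sum_le_sum hsum) hcount)
  calc (n:ℝ)⁻¹ * ‖∑ m ∈ Finset.Icc 1 n, (f (φ^[m] z) - f 0)‖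
      ≤ (n:ℝ)⁻¹ * (2*M + (ε/2)*n) := by
        apply mul_le_mul_of_nonneg_left h5 (by positivity)
    _ ≤ ε := by
        rw [mul_add]
        have h6 : (n:ℝ)⁻¹ * (2*M) ≤ ε/2 := by
          rw [inv_mul_le_iff₀ hnR]
          nlinarith
        have h7 : (n:ℝ)⁻¹ * ((ε/2)*n) = ε/2 := by field_simp
        linarith
lemma unif_to_me {φ : ℂ → ℂ} (hU : UnifMeanErgodicDiscAlg φ) : MeanErgodicDiscAlg φ := by
  obtain ⟨P, hP⟩ := hU
  intro f hf
  obtain ⟨C, hC⟩ := (isCompact_closedBall (0:ℂ) 1).exists_bound_of_continuousOn hf.1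
  set C' : ℝ := max C 1 with hC'def
  have hC'pos : (0:ℝ) < C' := lt_of_lt_of_le one_pos (le_max_right _ _)
  have hC'ne : ((C':ℝ):ℂ) ≠ 0 := by exact_mod_cast hC'pos.ne'
  set f₁ : ℂ → ℂ := fun z => ((C':ℝ):ℂ)⁻¹ * f z with hf₁def
  have hf₁ : IsDiscAlg f₁ := ⟨continuousOn_const.mul hf.1, (hf.2.const_mul _)⟩
  have hf₁b : ∀ z ∈ closedBall (0:ℂ) 1, ‖f₁ z‖ ≤ 1 := by
    intro z hz
    simp only [hf₁def]
    rw [norm_mul, norm_inv, Complex.norm_real, Real.norm_eq_abs, _root_.abs_of_pos hC'pos]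
    have h2 : ‖f z‖ ≤ C' := le_trans (hC z hz) (le_max_left _ _)
    calc C'⁻¹ * ‖f z‖ ≤ C'⁻¹ * C' := by
          apply mul_le_mul_of_nonneg_left h2 (by positivity)
      _ = 1 := inv_mul_cancel₀ hC'pos.ne'
  refine ⟨fun z => ((C':ℝ):ℂ) * P f₁ z, ?_⟩
  rw [Metric.tendstoUniformlyOn_iff]
  intro ε hε
  obtain ⟨N, hN⟩ := hP (ε/(2*C')) (by positivity)
  rw [eventually_atTop]
  refine ⟨N, fun n hn z hz => ?_⟩
  have h1 := hN n hn f₁ hf₁ hf₁b z hz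
  have hlin : cesaro φ f n z = ((C':ℝ):ℂ) * cesaro φ f₁ n z := by
    simp only [cesaro, hf₁def, Finset.mul_sum]
    field_simp
  rw [dist_eq_norm, hlin, ← mul_sub, norm_mul, Complex.norm_real, Real.norm_eq_abs,
    _root_.abs_of_pos hC'pos]
  have h2 : ‖P f₁ z - cesaro φ f₁ n z‖ ≤ ε/(2*C') := by rw [norm_sub_rev]; exact h1
  calc C' * ‖P f₁ z - cesaro φ f₁ n z‖ ≤ C' * (ε/(2*C')) := by
        apply mul_le_mul_of_nonneg_left h2 hC'pos.le
    _ = ε/2 := by field_simp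
    _ < ε := by linarith

end ME8

namespace ME8

open Metric Set Filter Complex Function

lemma forward {φ : ℂ → ℂ} (hφa : IsDiscAlg φ)
    (hφm : MapsTo φ (closedBall (0:ℂ) 1) (closedBall (0:ℂ) 1))
    (hφb : MapsTo φ (ball (0:ℂ) 1) (ball (0:ℂ) 1))
    (hDW : TendstoLocallyUniformlyOn (fun (n : ℕ) (z : ℂ) => φ^[n] z) (fun _ => (0:ℂ))
      atTop (ball (0:ℂ) 1))
    (hME : MeanErgodicDiscAlg φ) :
    ∀ z ∈ closedBall (0:ℂ) 1, Tendsto (fun n : ℕ => φ^[n] z) atTop (𝓝 (0:ℂ)) := by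
  intro z₀ hz₀
  by_contra hcon
  -- Step 1: the whole orbit of `z₀` stays on the unit circle
  have hnotball : ∀ k : ℕ, φ^[k] z₀ ∉ ball (0:ℂ) 1 := by
    intro k hk
    apply hcon
    have h1 := iter_tendsto_ball hDW hk
    have h2 : Tendsto (fun n : ℕ => φ^[n + k] z₀) atTop (𝓝 (0:ℂ)) := by
      refine h1.congr fun n => ?_
      rw [Function.iterate_add_apply]
    exact (tendsto_add_atTop_iff_nat k).mp h2
  have hnorm1 : ∀ k : ℕ, ‖φ^[k] z₀‖ = 1 := by
    intro k
    have h1 : ‖φ^[k] z₀‖ ≤ 1 := mem_closedBall_zero_iff.mp (iterMapsTo hφm k hz₀)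
    have h2 : ¬ ‖φ^[k] z₀‖ < 1 := fun h => hnotball k (mem_ball_zero_iff.mpr h)
    exact le_antisymm h1 (not_lt.mp h2)
  set u : ℕ → ℂ := fun m => φ^[m+1] z₀ with hu_def
  have hu : ∀ m, ‖u m‖ = 1 := fun m => hnorm1 (m+1)
  -- Step 2: Cesàro limits of integer powers along the orbit
  have hplus : ∀ k : ℕ, k ≠ 0 → Tendsto (fun n : ℕ => (n:ℂ)⁻¹ * ∑ m ∈ Finset.range n, (u m)^k)
      atTop (𝓝 (0:ℂ)) := by
    intro k hk
    have hf : IsDiscAlg (fun z : ℂ => z^k) :=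
      ⟨(continuous_pow k).continuousOn, (differentiable_pow k).differentiableOn⟩
    have h1 := key hφa hφm hDW hME hf hz₀
    rw [zero_pow hk] at h1
    refine h1.congr fun n => ?_
    rw [cesaro_shift]
  have hmono : ∀ j : ℤ, Tendsto (fun n : ℕ => (n:ℂ)⁻¹ * ∑ m ∈ Finset.range n, (u m)^j) atTop
      (𝓝 (if j = 0 then 1 else 0)) := by
    intro j
    rcases lt_trichotomy j 0 with hj | hj | hj
    · rw [if_neg (by omega)]
      have h1 := hplus (-j).toNat (by omega)
      have h2 : Tendsto (fun n : ℕ =>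
          (starRingEnd ℂ) ((n:ℂ)⁻¹ * ∑ m ∈ Finset.range n, (u m)^((-j).toNat)))
          atTop (𝓝 ((starRingEnd ℂ) 0)) := (Complex.continuous_conj.tendsto _).comp h1
      simp only [map_zero] at h2
      refine h2.congr fun n => ?_
      rw [map_mul, map_inv₀, map_natCast, map_sum]
      congr 1
      refine Finset.sum_congr rfl fun m _ => ?_
      have h3 : (u m)^((-j).toNat) = (u m)^(-j) := by
        rw [← zpow_natCast, Int.toNat_of_nonneg (by omega : (0:ℤ) ≤ -j)]
      rw [h3, map_zpow₀, norm_one_conj_eq_inv (hu m), inv_zpow, ← zpow_neg, neg_neg]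
    · subst hj
      rw [if_pos rfl]
      simp only [zpow_zero]
      have heq : ∀ n : ℕ, 1 ≤ n → (n:ℂ)⁻¹ * ∑ m ∈ Finset.range n, (1:ℂ) = 1 := by
        intro n hn
        rw [Finset.sum_const, Finset.card_range, nsmul_eq_mul, mul_one,
          inv_mul_cancel₀ (Nat.cast_ne_zero.mpr (by omega))]
      apply Tendsto.congr' ?_ (tendsto_const_nhds (x := (1:ℂ)))
      filter_upwards [eventually_ge_atTop 1] with n hn
      exact (heq n hn).symm
    · rw [if_neg (by omega)]
      have h1 := hplus j.toNat (by omega)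
      refine h1.congr fun n => ?_
      congr 1
      refine Finset.sum_congr rfl fun m _ => ?_
      rw [← zpow_natCast, Int.toNat_of_nonneg hj.le]
  -- Step 3: the orbit is dense in the circle, hence `|φ| = 1` on the circle
  have hfull : ∀ ζ : ℂ, ‖ζ‖ = 1 → ‖φ ζ‖ = 1 := by
    intro ζ hζ
    have hsel : ∀ k : ℕ, ∃ m, ‖u m - ζ‖ < 1/((k:ℝ)+1) := fun k =>
      dense_step hu hmono hζ (by positivity)
    choose m hm using hsel
    have hlim : Tendsto (fun k => u (m k)) atTop (𝓝 ζ) := by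
      rw [tendsto_iff_dist_tendsto_zero]
      refine squeeze_zero (fun k => dist_nonneg) (fun k => ?_)
        tendsto_one_div_add_atTop_nhds_zero_nat
      rw [dist_eq_norm]; exact (hm k).le
    have hζball : ζ ∈ closedBall (0:ℂ) 1 := by rw [mem_closedBall_zero_iff, hζ]
    have hcw : ContinuousWithinAt φ (closedBall (0:ℂ) 1) ζ := hφa.1 ζ hζball
    have hlim' : Tendsto (fun k => u (m k)) atTop (𝓝[closedBall (0:ℂ) 1] ζ) :=
      tendsto_nhdsWithin_of_tendsto_nhds_of_eventually_within _ hlim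
        (Eventually.of_forall fun k => mem_closedBall_zero_iff.mpr (hu (m k)).le)
    have h2 : Tendsto (fun k => φ (u (m k))) atTop (𝓝 (φ ζ)) := hcw.tendsto.comp hlim'
    have h3 : Tendsto (fun k => ‖φ (u (m k))‖) atTop (𝓝 ‖φ ζ‖) := h2.norm
    have h4 : ∀ k, ‖φ (u (m k))‖ = 1 := by
      intro k
      have h5 : φ (u (m k)) = φ^[m k + 2] z₀ := by
        simp only [hu_def]
        rw [← Function.iterate_succ_apply' φ (m k + 1)]
      rw [h5]; exact hnorm1 _
    exact tendsto_nhds_unique h3 (tendsto_const_nhds.congr fun k => (h4 k).symm)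
  -- Step 4: `φ 0 = 0` and the function `ψ = φ(z)/z`
  have hφ0 : φ 0 = 0 := by
    have h1 := iter_tendsto_ball hDW (mem_ball_self one_pos)
    have hca : ContinuousAt φ 0 := hφa.1.continuousAt (closedBall_mem_nhds 0 one_pos)
    have h2 : Tendsto (fun n : ℕ => φ (φ^[n] (0:ℂ))) atTop (𝓝 (φ 0)) := hca.tendsto.comp h1
    have h3 : Tendsto (fun n : ℕ => φ^[n+1] (0:ℂ)) atTop (𝓝 (0:ℂ)) :=
      h1.comp (tendsto_add_atTop_nat 1)
    refine tendsto_nhds_unique ?_ h3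
    refine h2.congr fun n => ?_
    rw [Function.iterate_succ_apply']
  set ψ : ℂ → ℂ := dslope φ 0 with hψdef
  have hφz : ∀ z : ℂ, φ z = z * ψ z := by
    intro z
    rcases eq_or_ne z 0 with rfl | hz
    · simp [hφ0]
    · rw [hψdef, dslope_of_ne _ hz, slope_def_field, hφ0]
      field_simp
      ring
  have hψd : DifferentiableOn ℂ ψ (ball (0:ℂ) 1) := by
    rw [hψdef]
    exact (differentiableOn_dslope (isOpen_ball.mem_nhds (mem_ball_self one_pos))).mpr hφa.2
  have hψc : ContinuousOn ψ (closedBall (0:ℂ) 1) := by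
    have h1 : ContinuousOn (fun w : ℂ => φ w * w⁻¹) (closedBall (0:ℂ) 1 \ {0}) := by
      apply ContinuousOn.mul (hφa.1.mono diff_subset)
      exact ContinuousOn.inv₀ continuousOn_id (fun x hx => by simpa using hx.2)
    have h2 : ContinuousOn ψ (closedBall (0:ℂ) 1 \ {0}) := by
      refine h1.congr fun w hw => ?_
      rw [hψdef, dslope_of_ne _ (by simpa using hw.2), slope_def_field, hφ0]
      field_simp
      simp only [sub_zero]
    intro z hz
    rcases eq_or_ne z 0 with rfl | hz0
    · have hda : DifferentiableAt ℂ φ 0 :=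
        hφa.2.differentiableAt (isOpen_ball.mem_nhds (mem_ball_self one_pos))
      rw [hψdef]
      exact (continuousAt_dslope_same.mpr hda).continuousWithinAt
    · have h3 := h2 z ⟨hz, by simpa using hz0⟩
      apply h3.mono_of_mem_nhdsWithin
      rw [Set.diff_eq]
      exact Filter.inter_mem self_mem_nhdsWithin
        (mem_nhdsWithin_of_mem_nhds (isOpen_compl_singleton.mem_nhds (by simpa using hz0)))
  have hψsphere : ∀ w : ℂ, ‖w‖ = 1 → ‖ψ w‖ = 1 := by
    intro w hw
    have h2 := hfull w hw
    rw [hφz w, norm_mul, hw, one_mul] at h2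
    exact h2
  have hψle : ∀ z ∈ closedBall (0:ℂ) 1, ‖ψ z‖ ≤ 1 := by
    intro z hz
    have hcl : closure (ball (0:ℂ) 1) = closedBall (0:ℂ) 1 := closure_ball 0 one_ne_zero
    refine Complex.norm_le_of_forall_mem_frontier_norm_le (isBounded_ball) ⟨hψd, ?_⟩ ?_ ?_
    · rw [hcl]; exact hψc
    · intro w hw
      rw [frontier_ball 0 one_ne_zero] at hw
      exact le_of_eq (hψsphere w (mem_sphere_zero_iff_norm.mp hw))
    · rwa [hcl]
  -- Step 5: `ψ` cannot be constant on the ball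
  have hconst_false : ∀ c : ℂ, (∀ z ∈ ball (0:ℂ) 1, ψ z = c) → False := by
    intro c hcst
    have hcc : ∀ z ∈ closedBall (0:ℂ) 1, ψ z = c := fun z hz =>
      eq_on_closed_of_eq_on_ball hψc hcst hz
    have hc1 : ‖c‖ = 1 := by
      have h1 : (1:ℂ) ∈ closedBall (0:ℂ) 1 := by
        rw [mem_closedBall_zero_iff]; norm_num
      have h2 : ‖ψ (1:ℂ)‖ = 1 := hψsphere 1 (by norm_num)
      rw [hcc 1 h1] at h2; exact h2
    set v : ℂ := ((2⁻¹ : ℝ) : ℂ) with hvdef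
    have hvn : ‖v‖ = 2⁻¹ := by
      rw [hvdef, Complex.norm_real, Real.norm_eq_abs]; norm_num
    have hvball : v ∈ ball (0:ℂ) 1 := by rw [mem_ball_zero_iff, hvn]; norm_num
    have hiter : ∀ n : ℕ, φ^[n] v = c^n * v := by
      intro n
      induction n with
      | zero => simp
      | succ k ih =>
          rw [Function.iterate_succ_apply', ih]
          have hmem : (c^k * v : ℂ) ∈ ball (0:ℂ) 1 := by
            rw [mem_ball_zero_iff, norm_mul, norm_pow, hc1, one_pow, one_mul, hvn]
            norm_num
          rw [hφz (c^k * v), hcst _ hmem]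
          ring
    have h5 := iter_tendsto_ball hDW hvball
    have h6 : Tendsto (fun n : ℕ => ‖φ^[n] v‖) atTop (𝓝 0) := by simpa using h5.norm
    have h7 : ∀ n : ℕ, ‖φ^[n] v‖ = 2⁻¹ := by
      intro n; rw [hiter n, norm_mul, norm_pow, hc1, one_pow, one_mul, hvn]
    have h8 : (2⁻¹:ℝ) = 0 :=
      tendsto_nhds_unique (tendsto_const_nhds.congr fun n => (h7 n).symm) h6
    norm_num at h8
  -- Step 6: strict maximum principle
  have hstrict : ∀ z ∈ ball (0:ℂ) 1, ‖ψ z‖ < 1 := by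
    intro z hz
    by_contra hge
    push_neg at hge
    have heq : ‖ψ z‖ = 1 := le_antisymm (hψle z (ball_subset_closedBall hz)) hge
    have hmax : IsMaxOn (norm ∘ ψ) (ball (0:ℂ) 1) z := by
      intro w hw
      have := hψle w (ball_subset_closedBall hw)
      simp only [Function.comp_apply, Set.mem_setOf_eq]
      rw [heq]; exact this
    have hEq := Complex.eqOn_of_isPreconnected_of_isMaxOn_norm
      (convex_ball (0:ℂ) 1).isPreconnected isOpen_ball hψd hz hmax
    exact hconst_false (ψ z) fun w hw => hEq hw
  -- Step 7: `ψ` maps the ball onto the ball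
  have himage : ball (0:ℂ) 1 ⊆ ψ '' (ball (0:ℂ) 1) := by
    have han : AnalyticOnNhd ℂ ψ (ball (0:ℂ) 1) := hψd.analyticOnNhd isOpen_ball
    rcases han.is_constant_or_isOpen (convex_ball (0:ℂ) 1).isPreconnected with ⟨w, hw⟩ | hopen
    · exact absurd (hconst_false w fun z hz => hw z hz) (fun h => h)
    · have hΩ : IsOpen (ψ '' ball (0:ℂ) 1) := hopen _ subset_rfl isOpen_ball
      have hcl : ∀ w ∈ ball (0:ℂ) 1, w ∈ closure (ψ '' ball (0:ℂ) 1) →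
          w ∈ ψ '' ball (0:ℂ) 1 := by
        intro w hw hwc
        rcases mem_closure_iff_seq_limit.mp hwc with ⟨y, hy, hylim⟩
        choose x hx hψx using hy
        obtain ⟨zst, hzmem, sl, hsl, hzlim⟩ := (isCompact_closedBall (0:ℂ) 1).tendsto_subseq
          (fun n => ball_subset_closedBall (hx n))
        have h1 : Tendsto (fun j => ψ (x (sl j))) atTop (𝓝 (ψ zst)) :=
          (hψc zst hzmem).tendsto.comp
            (tendsto_nhdsWithin_of_tendsto_nhds_of_eventually_within _ hzlim
              (Eventually.of_forall fun j => ball_subset_closedBall (hx (sl j))))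
        have h2 : Tendsto (fun j => ψ (x (sl j))) atTop (𝓝 w) := by
          have h3 := hylim.comp hsl.tendsto_atTop
          exact h3.congr fun j => (hψx (sl j)).symm
        have h3 : ψ zst = w := tendsto_nhds_unique h1 h2
        have h4 : zst ∈ ball (0:ℂ) 1 := by
          rw [mem_ball_zero_iff]
          rcases lt_or_eq_of_le (mem_closedBall_zero_iff.mp hzmem) with h | h
          · exact h
          · exfalso
            have h5 : ‖ψ zst‖ = 1 := hψsphere zst h
            rw [h3] at h5
            have h6 : ‖w‖ < 1 := mem_ball_zero_iff.mp hw
            rw [h5] at h6; norm_num at h6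
        exact ⟨zst, h4, h3⟩
      intro w hw
      by_contra hwn
      have hV : IsOpen (closure (ψ '' ball (0:ℂ) 1))ᶜ := isClosed_closure.isOpen_compl
      have hcover : ball (0:ℂ) 1 ⊆ (ψ '' ball (0:ℂ) 1) ∪ (closure (ψ '' ball (0:ℂ) 1))ᶜ := by
        intro v hv
        by_cases hvc : v ∈ closure (ψ '' ball (0:ℂ) 1)
        · exact Or.inl (hcl v hv hvc)
        · exact Or.inr hvc
      have hne1 : ((ball (0:ℂ) 1) ∩ (ψ '' ball (0:ℂ) 1)).Nonempty := by
        refine ⟨ψ 0, ?_, ⟨0, mem_ball_self one_pos, rfl⟩⟩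
        rw [mem_ball_zero_iff]
        exact hstrict 0 (mem_ball_self one_pos)
      have hne2 : ((ball (0:ℂ) 1) ∩ (closure (ψ '' ball (0:ℂ) 1))ᶜ).Nonempty :=
        ⟨w, hw, fun hc => hwn (hcl w hw hc)⟩
      obtain ⟨v, hv⟩ := (convex_ball (0:ℂ) 1).isPreconnected _ _ hΩ hV hcover hne1 hne2
      exact hv.2.2 (subset_closure hv.2.1)
  -- Step 8: a fixed point of `φ` on the circle
  have hfix : ∃ ζf : ℂ, ‖ζf‖ = 1 ∧ φ ζf = ζf := by
    have hcoef : ∀ k : ℕ, 0 < (1 - ((k:ℝ)+2)⁻¹) ∧ (1 - ((k:ℝ)+2)⁻¹) < 1 := by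
      intro k
      have h2 : (0:ℝ) < (k:ℝ) + 2 := by positivity
      have h3 : ((k:ℝ)+2)⁻¹ ≤ 2⁻¹ := by
        apply inv_anti₀ <;> [norm_num; linarith [Nat.cast_nonneg (α := ℝ) k]]
      have h4 : (0:ℝ) < ((k:ℝ)+2)⁻¹ := by positivity
      constructor <;> nlinarith
    set w : ℕ → ℂ := fun k => ((1 - ((k:ℝ)+2)⁻¹ : ℝ) : ℂ) with hwdef
    have hwmem : ∀ k, w k ∈ ball (0:ℂ) 1 := by
      intro k
      rw [mem_ball_zero_iff, hwdef]
      rw [Complex.norm_real, Real.norm_eq_abs, _root_.abs_of_pos (hcoef k).1]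
      exact (hcoef k).2
    have hwlim : Tendsto w atTop (𝓝 (1:ℂ)) := by
      have h0 : Tendsto (fun k : ℕ => ((k:ℝ)+2)⁻¹) atTop (𝓝 0) := by
        apply Tendsto.inv_tendsto_atTop
        exact tendsto_atTop_add_const_right atTop 2 tendsto_natCast_atTop_atTop
      have h1 : Tendsto (fun k : ℕ => 1 - ((k:ℝ)+2)⁻¹) atTop (𝓝 1) := by
        simpa using tendsto_const_nhds.sub h0
      have h2 := (Complex.continuous_ofReal.tendsto (1:ℝ)).comp h1
      rw [Complex.ofReal_one] at h2
      exact h2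
    choose x hx hψx using fun k => himage (hwmem k)
    obtain ⟨zst, hzmem, sl, hsl, hzlim⟩ := (isCompact_closedBall (0:ℂ) 1).tendsto_subseq
      (fun n => ball_subset_closedBall (hx n))
    have h1 : Tendsto (fun j => ψ (x (sl j))) atTop (𝓝 (ψ zst)) :=
      (hψc zst hzmem).tendsto.comp
        (tendsto_nhdsWithin_of_tendsto_nhds_of_eventually_within _ hzlim
          (Eventually.of_forall fun j => ball_subset_closedBall (hx (sl j))))
    have h2 : Tendsto (fun j => ψ (x (sl j))) atTop (𝓝 (1:ℂ)) := by
      have h3 := hwlim.comp hsl.tendsto_atTop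
      exact h3.congr fun j => (hψx (sl j)).symm
    have h3 : ψ zst = 1 := tendsto_nhds_unique h1 h2
    have h4 : ‖zst‖ = 1 := by
      rcases lt_or_eq_of_le (mem_closedBall_zero_iff.mp hzmem) with h | h
      · exfalso
        have := hstrict zst (mem_ball_zero_iff.mpr h)
        rw [h3] at this; norm_num at this
      · exact h
    refine ⟨zst, h4, ?_⟩
    rw [hφz zst, h3, mul_one]
  -- Step 9: contradiction via the Cesàro limit at the fixed point
  obtain ⟨ζf, hζ1, hζfix⟩ := hfix
  have hfixiter : ∀ n : ℕ, φ^[n] ζf = ζf := by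
    intro n
    induction n with
    | zero => rfl
    | succ k ih => rw [Function.iterate_succ_apply', ih, hζfix]
  have hid : IsDiscAlg (fun z : ℂ => z) := ⟨continuousOn_id, differentiableOn_id⟩
  have h1 := key hφa hφm hDW hME hid (mem_closedBall_zero_iff.mpr hζ1.le)
  have h2 : ∀ n : ℕ, 1 ≤ n → cesaro φ (fun z => z) n ζf = ζf := by
    intro n hn
    rw [cesaro_shift]
    have h3 : ∀ m : ℕ, (fun z : ℂ => z) (φ^[m+1] ζf) = ζf := fun m => hfixiter (m+1)
    simp only [h3]
    rw [Finset.sum_const, Finset.card_range, nsmul_eq_mul, ← mul_assoc,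
      inv_mul_cancel₀ (Nat.cast_ne_zero.mpr (by omega : n ≠ 0)), one_mul]
  have h3 : Tendsto (fun n => cesaro φ (fun z : ℂ => z) n ζf) atTop (𝓝 ζf) := by
    apply Tendsto.congr' ?_ (tendsto_const_nhds (x := ζf))
    filter_upwards [eventually_ge_atTop 1] with n hn
    exact (h2 n hn).symm
  have h4 : ζf = (0:ℂ) := tendsto_nhds_unique h3 h1
  rw [h4] at hζ1
  norm_num at hζ1

end ME8


/-- **Interior Denjoy–Wolff point, `A(𝔻)` case.** Let `φ ∈ A(𝔻)` map `𝔻̄` into `𝔻̄` with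
Denjoy–Wolff point `0` (i.e. `φ^n → 0` uniformly on compact subsets of `𝔻`). Then the
following are equivalent: (i) `C_φ` is mean ergodic on `A(𝔻)`; (ii) `C_φ` is uniformly
mean ergodic on `A(𝔻)`; (iii) `φ^n(z) → 0` for every `z ∈ 𝔻̄`. -/
theorem stmt_8 (φ : ℂ → ℂ) (hφa : IsDiscAlg φ)
    (hφm : MapsTo φ (closedBall (0:ℂ) 1) (closedBall (0:ℂ) 1))
    (hφb : MapsTo φ (ball (0:ℂ) 1) (ball (0:ℂ) 1))
    (hDW : TendstoLocallyUniformlyOn (fun (n : ℕ) (z : ℂ) => φ^[n] z) (fun _ => (0:ℂ))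
      atTop (ball (0:ℂ) 1)) :
    (MeanErgodicDiscAlg φ ↔
      ∀ z ∈ closedBall (0:ℂ) 1, Tendsto (fun n : ℕ => φ^[n] z) atTop (𝓝 (0:ℂ))) ∧
    (UnifMeanErgodicDiscAlg φ ↔
      ∀ z ∈ closedBall (0:ℂ) 1, Tendsto (fun n : ℕ => φ^[n] z) atTop (𝓝 (0:ℂ))) := by
  have hforward := ME8.forward hφa hφm hφb hDW
  have hrev := ME8.iii_to_unif hφa hφm hφb hDW
  constructor
  · exact ⟨fun h => hforward h, fun h => ME8.unif_to_me (hrev h)⟩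
  · exact ⟨fun h => hforward (ME8.unif_to_me h), hrev⟩
end
end
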